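/- arXiv:2512.10410 — 5 statements merged into one kernel-verified Lean document; each statement's English description precedes it below -/
import Mathlib

section
/- For unital C*-algebras A and B, the minimal Namioka–Phelps tensor product of the state spaces equals the set of separable states: S(A) ⊗_* S(B) = S_*(A⊗B), where the identification is by restriction of states on A⊗B to the algebraic tensor product A_sa ⊙ B_sa. -/
open scoped TensorProduct ComplexOrder ENNReal

namespace CStarNP

variable (A : Type*) (B : Type*) [CStarAlgebra A] [CStarAlgebra B]

/-- The state space of a unital C*-algebra, as a set of linear functionals. -/
def states : Set (A →ₗ[ℂ] ℂ) := {φ | φ 1 = 1 ∧ ∀ a : A, 0 ≤ φ (star a * a)}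

/-- The product functional `φ ⊗ ψ` on the algebraic tensor product. -/
noncomputable def prodFunctional (φ : A →ₗ[ℂ] ℂ) (ψ : B →ₗ[ℂ] ℂ) : (A ⊗[ℂ] B) →ₗ[ℂ] ℂ :=
  (TensorProduct.lid ℂ ℂ).toLinearMap ∘ₗ TensorProduct.map φ ψ

/-- The positive cone `(A ⊙ B)⁺ = {x* x : x ∈ A ⊙ B}` of the algebraic tensor product,
expressed via families (so as to avoid a star operation on the tensor product). -/
def algPos : Set (A ⊗[ℂ] B) :=
  {z | ∃ (n : ℕ) (a : Fin n → A) (b : Fin n → B),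
    z = ∑ i, ∑ j, (star (a i) * a j) ⊗ₜ[ℂ] (star (b i) * b j)}

/-- The cone `A⁺ ⊙ B⁺` generated by elementary tensors of positive elements. -/
def elemPosCone : Set (A ⊗[ℂ] B) :=
  (AddSubmonoid.closure {z | ∃ (a : A) (b : B), z = (star a * a) ⊗ₜ[ℂ] (star b * b)} : Set (A ⊗[ℂ] B))

/-- The real span `A_sa ⊙ B_sa` inside `A ⊙ B`. -/
noncomputable def saSpan : Submodule ℝ (A ⊗[ℂ] B) :=
  Submodule.span ℝ {z | ∃ (a : A) (b : B), IsSelfAdjoint a ∧ IsSelfAdjoint b ∧ z = a ⊗ₜ[ℂ] b}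

/-- The outer cone `A⁺ ⊗̂ B⁺`. -/
def hatCone : Set (A ⊗[ℂ] B) :=
  {z | z ∈ saSpan A B ∧ ∀ φ ∈ states A, ∀ ψ ∈ states B, 0 ≤ prodFunctional A B φ ψ z}

/-- `gnsNorm S x` is `sup |⟨π(x) w Ω, v Ω⟩|` over functionals in `S` and vectors `v, w`
in the corresponding GNS representations of norm at most one. -/
noncomputable def gnsNorm (S : Set ((A ⊗[ℂ] B) →ₗ[ℂ] ℂ)) (x : A ⊗[ℂ] B) : ℝ :=
  sSup {r | ∃ φ ∈ S, ∃ (n m : ℕ) (a : Fin n → A) (b : Fin n → B) (c : Fin m → A) (d : Fin m → B),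
    (φ ((∑ i, star (a i) ⊗ₜ[ℂ] star (b i)) * (∑ i, a i ⊗ₜ[ℂ] b i))).re ≤ 1 ∧
    (φ ((∑ j, star (c j) ⊗ₜ[ℂ] star (d j)) * (∑ j, c j ⊗ₜ[ℂ] d j))).re ≤ 1 ∧
    r = ‖φ ((∑ i, star (a i) ⊗ₜ[ℂ] star (b i)) * x * (∑ j, c j ⊗ₜ[ℂ] d j))‖}

/-- Algebraic states on `A ⊙ B`: unital and positive on `(A ⊙ B)⁺`. -/
def algStates : Set ((A ⊗[ℂ] B) →ₗ[ℂ] ℂ) :=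
  {ρ | ρ 1 = 1 ∧ ∀ z ∈ algPos A B, 0 ≤ ρ z}

/-- The maximal C*-tensor norm on `A ⊙ B`. -/
noncomputable def maxNorm : A ⊗[ℂ] B → ℝ := gnsNorm A B (algStates A B)

/-- The minimal (spatial) C*-tensor norm on `A ⊙ B`. -/
noncomputable def minNorm : A ⊗[ℂ] B → ℝ :=
  gnsNorm A B {ω | ∃ φ ∈ states A, ∃ ψ ∈ states B, ω = prodFunctional A B φ ψ}

/-- The state space of `A ⊗ B` (minimal tensor product), identified with the set of its
restrictions to the algebraic tensor product. -/
def minStates : Set ((A ⊗[ℂ] B) →ₗ[ℂ] ℂ) :=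
  {ρ | ρ 1 = 1 ∧ (∀ z ∈ algPos A B, 0 ≤ ρ z) ∧ ∀ x, ‖ρ x‖ ≤ minNorm A B x}

/-- The state space of `A ⊗_max B`, identified with the set of its
restrictions to the algebraic tensor product. -/
def maxStates : Set ((A ⊗[ℂ] B) →ₗ[ℂ] ℂ) :=
  {ρ | ρ 1 = 1 ∧ (∀ z ∈ algPos A B, 0 ≤ ρ z) ∧ ∀ x, ‖ρ x‖ ≤ maxNorm A B x}

/-- Product state functions. -/
noncomputable def prodStateFns : Set ((A ⊗[ℂ] B) → ℂ) :=
  {f | ∃ φ ∈ states A, ∃ ψ ∈ states B, f = ⇑(prodFunctional A B φ ψ)}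

/-- The separable states `S_*(A ⊗ B)`: the weak*-closed convex hull of the product states. -/
noncomputable def sepStates : Set ((A ⊗[ℂ] B) →ₗ[ℂ] ℂ) :=
  {ρ | ⇑ρ ∈ closure (convexHull ℝ (prodStateFns A B))}

/-- The minimal Namioka--Phelps tensor product `S(A) ⊗_* S(B)`. -/
def minTensorStates : Set ((A ⊗[ℂ] B) →ₗ[ℂ] ℂ) :=
  {ρ | ρ 1 = 1 ∧ ∀ z ∈ hatCone A B, 0 ≤ ρ z}

/-- The maximal Namioka--Phelps tensor product `S(A) ⊗^* S(B)`. -/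
def maxTensorStates : Set ((A ⊗[ℂ] B) →ₗ[ℂ] ℂ) :=
  {ρ | ρ 1 = 1 ∧ ∀ (a : A) (b : B), 0 ≤ ρ ((star a * a) ⊗ₜ[ℂ] (star b * b))}

/-- The constant `κ(A, B)`. -/
noncomputable def kappa : ℝ≥0∞ :=
  ⨆ ρ ∈ maxTensorStates A B, ⨆ x ∈ {x | maxNorm A B x ≤ 1}, ENNReal.ofReal ‖ρ x‖

end CStarNP


section Aux

lemma CStarNP.pi_clm_rep {ι : Type*} (f : (ι → ℂ) →L[ℝ] ℝ) :
    ∃ (s : Finset ι) (w : ι → ℂ), ∀ g : ι → ℂ, f g = ∑ i ∈ s, (w i * g i).re := by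
  classical
  have hU : f ⁻¹' (Set.Ioo (-1 : ℝ) 1) ∈ nhds (0 : ι → ℂ) := by
    have : IsOpen (f ⁻¹' (Set.Ioo (-1 : ℝ) 1)) := isOpen_Ioo.preimage f.continuous
    exact this.mem_nhds (by simp)
  rw [nhds_pi, Filter.mem_pi] at hU
  obtain ⟨I, hIfin, t, ht, hsub⟩ := hU
  set s : Finset ι := hIfin.toFinset with hs
  have key : ∀ h : ι → ℂ, (∀ i ∈ I, h i = 0) → f h = 0 := by
    intro h h0
    by_contra hne
    have hmem : ∀ r : ℝ, r • h ∈ I.pi t := by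
      intro r i hi
      simp [h0 i hi]
      exact mem_of_mem_nhds (ht i)
    have hb : ∀ r : ℝ, |f (r • h)| < 1 := by
      intro r
      have := hsub (hmem r)
      simp only [Set.mem_preimage, Set.mem_Ioo] at this
      rw [abs_lt]; exact this
    have := hb (2 / f h)
    rw [map_smul] at this
    rw [smul_eq_mul, div_mul_cancel₀ _ hne] at this
    norm_num at this
  refine ⟨s, fun i => (Complex.ofReal (f (Pi.single i 1)) -
      Complex.I * Complex.ofReal (f (Pi.single i Complex.I))), fun g => ?_⟩
  have hdecomp : f g = ∑ i ∈ s, f (Pi.single i (g i)) := by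
    have : f (g - ∑ i ∈ s, Pi.single i (g i)) = 0 := by
      apply key
      intro i hi
      have his : i ∈ s := hIfin.mem_toFinset.mpr hi
      simp [Finset.sum_apply, Finset.sum_pi_single, his]
    rw [map_sub, map_sum] at this
    linarith [this]
  rw [hdecomp]
  refine Finset.sum_congr rfl fun i _ => ?_
  have hsingle : Pi.single i (g i) = (g i).re • (Pi.single i (1 : ℂ) : ι → ℂ) +
      (g i).im • (Pi.single i Complex.I : ι → ℂ) := by
    funext j
    rcases eq_or_ne j i with rfl | hji
    · simp [Pi.single_apply, Complex.ext_iff, Complex.real_smul]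
    · simp [Pi.single_apply, hji]
  rw [hsingle, map_add, map_smul, map_smul]
  simp [Complex.ext_iff, Complex.mul_re, Complex.mul_im]
  ring

variable {A : Type*} [CStarAlgebra A]

lemma CStarNP.sq_decomp (a : A) (ha : IsSelfAdjoint a) :
    ∃ x y : A, a = star x * x - star y * y := by
  have hcont : ContinuousOn (fun t : ℝ => Real.sqrt (max t 0)) (spectrum ℝ a) :=
    (Real.continuous_sqrt.comp (continuous_id.max continuous_const)).continuousOn
  have hcont' : ContinuousOn (fun t : ℝ => Real.sqrt (max (-t) 0)) (spectrum ℝ a) :=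
    (Real.continuous_sqrt.comp (continuous_neg.max continuous_const)).continuousOn
  refine ⟨cfc (fun t : ℝ => Real.sqrt (max t 0)) a, cfc (fun t : ℝ => Real.sqrt (max (-t) 0)) a, ?_⟩
  have hx : IsSelfAdjoint (cfc (fun t : ℝ => Real.sqrt (max t 0)) a) := cfc_predicate _ a
  have hy : IsSelfAdjoint (cfc (fun t : ℝ => Real.sqrt (max (-t) 0)) a) := cfc_predicate _ a
  rw [hx.star_eq, hy.star_eq, ← cfc_mul _ _ a hcont hcont, ← cfc_mul _ _ a hcont' hcont',
    ← cfc_sub _ _ a]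
  conv_lhs => rw [← cfc_id ℝ a ha]
  apply cfc_congr
  intro t _
  simp only [id_eq]
  rw [Real.mul_self_sqrt (le_max_right _ _), Real.mul_self_sqrt (le_max_right _ _)]
  rcases le_total t 0 with h | h
  · rw [max_eq_right h, max_eq_left (by linarith)]; ring
  · rw [max_eq_left h, max_eq_right (by linarith)]; ring

lemma CStarNP.state_im {φ : A →ₗ[ℂ] ℂ} (h1 : φ 1 = 1) (hpos : ∀ x : A, 0 ≤ φ (star x * x))
    {a : A} (ha : IsSelfAdjoint a) : (φ a).im = 0 := by
  have key : φ (star (1 + a) * (1 + a)) = 1 + 2 * φ a + φ (star a * a) := by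
    have hsa : star (1 + a) = 1 + a := ((IsSelfAdjoint.one A).add ha).star_eq
    rw [hsa]
    have expand : (1 + a) * (1 + a) = 1 + a + (a + star a * a) := by
      rw [ha.star_eq]; noncomm_ring
    rw [expand, map_add, map_add, map_add, h1]
    ring
  have im1 : (φ (star (1 + a) * (1 + a))).im = 0 := by
    have := hpos (1 + a)
    rw [Complex.le_def] at this; simpa using this.2.symm
  have im2 : (φ (star a * a)).im = 0 := by
    have := hpos a
    rw [Complex.le_def] at this; simpa using this.2.symm
  have := congrArg Complex.im key
  rw [im1] at this
  simp [Complex.add_im, Complex.mul_im, im2] at this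
  linarith

end Aux

namespace CStarNP
variable {A : Type*} {B : Type*} [CStarAlgebra A] [CStarAlgebra B]

lemma prodFunctional_tmul (φ : A →ₗ[ℂ] ℂ) (ψ : B →ₗ[ℂ] ℂ) (a : A) (b : B) :
    prodFunctional A B φ ψ (a ⊗ₜ[ℂ] b) = φ a * ψ b := by
  simp [prodFunctional, TensorProduct.lid_tmul, smul_eq_mul]

lemma prodFunctional_one {φ : A →ₗ[ℂ] ℂ} {ψ : B →ₗ[ℂ] ℂ} (h1 : φ 1 = 1) (h2 : ψ 1 = 1) :
    prodFunctional A B φ ψ 1 = 1 := by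
  rw [Algebra.TensorProduct.one_def, prodFunctional_tmul, h1, h2, one_mul]

lemma star_mul_self_tmul_mem_hatCone (x : A) (y : B) :
    (star x * x) ⊗ₜ[ℂ] (star y * y) ∈ hatCone A B := by
  constructor
  · exact Submodule.subset_span ⟨star x * x, star y * y,
      IsSelfAdjoint.star_mul_self x, IsSelfAdjoint.star_mul_self y, rfl⟩
  · intro φ hφ ψ hψ
    rw [prodFunctional_tmul]
    exact mul_nonneg (hφ.2 x) (hψ.2 y)

lemma exists_sa_decomp_elem (a : A) :
    ∃ a₁ a₂ : A, IsSelfAdjoint a₁ ∧ IsSelfAdjoint a₂ ∧ a = a₁ + Complex.I • a₂ := by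
  refine ⟨(2 : ℂ)⁻¹ • (a + star a), (2 : ℂ)⁻¹ • (Complex.I • (star a - a)), ?_, ?_, ?_⟩
  · rw [IsSelfAdjoint, star_smul, star_add, star_star]
    simp [add_comm]
  · rw [IsSelfAdjoint, star_smul, star_smul, star_sub, star_star]
    simp only [Complex.star_def, Complex.conj_I, map_inv₀, Complex.conj_ofNat]
    rw [neg_smul, ← smul_neg, neg_sub]
  · rw [smul_comm Complex.I ((2:ℂ)⁻¹), smul_smul Complex.I Complex.I, Complex.I_mul_I]
    module

lemma exists_sa_decomp (z : A ⊗[ℂ] B) :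
    ∃ w v, w ∈ saSpan A B ∧ v ∈ saSpan A B ∧ z = w + Complex.I • v := by
  induction z using TensorProduct.induction_on with
  | zero => exact ⟨0, 0, zero_mem _, zero_mem _, by simp⟩
  | tmul a b =>
    obtain ⟨a₁, a₂, ha₁, ha₂, ha⟩ := exists_sa_decomp_elem a
    obtain ⟨b₁, b₂, hb₁, hb₂, hb⟩ := exists_sa_decomp_elem b
    refine ⟨a₁ ⊗ₜ b₁ - a₂ ⊗ₜ b₂, a₁ ⊗ₜ b₂ + a₂ ⊗ₜ b₁, ?_, ?_, ?_⟩
    · exact sub_mem (Submodule.subset_span ⟨a₁, b₁, ha₁, hb₁, rfl⟩)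
        (Submodule.subset_span ⟨a₂, b₂, ha₂, hb₂, rfl⟩)
    · exact add_mem (Submodule.subset_span ⟨a₁, b₂, ha₁, hb₂, rfl⟩)
        (Submodule.subset_span ⟨a₂, b₁, ha₂, hb₁, rfl⟩)
    · rw [ha, hb]
      simp only [TensorProduct.add_tmul, TensorProduct.tmul_add, ← TensorProduct.smul_tmul',
        TensorProduct.tmul_smul, smul_smul, Complex.I_mul_I, neg_one_smul, smul_add]
      abel
  | add x y hx hy =>
    obtain ⟨w₁, v₁, hw₁, hv₁, h₁⟩ := hx
    obtain ⟨w₂, v₂, hw₂, hv₂, h₂⟩ := hy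
    exact ⟨w₁ + w₂, v₁ + v₂, add_mem hw₁ hw₂, add_mem hv₁ hv₂, by
      rw [h₁, h₂, smul_add]; abel⟩

lemma im_zero_on_saSpan (θ : (A ⊗[ℂ] B) →ₗ[ℂ] ℂ)
    (h : ∀ (a : A) (b : B), IsSelfAdjoint a → IsSelfAdjoint b → (θ (a ⊗ₜ[ℂ] b)).im = 0) :
    ∀ z ∈ saSpan A B, (θ z).im = 0 := by
  intro z hz
  induction hz using Submodule.span_induction with
  | mem x hx => obtain ⟨a, b, ha, hb, rfl⟩ := hx; exact h a b ha hb
  | zero => simp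
  | add x y _ _ hx hy => rw [map_add, Complex.add_im, hx, hy, add_zero]
  | smul r x _ hx =>
    rw [LinearMap.map_smul_of_tower, Complex.real_smul, Complex.mul_im]
    simp [hx]

lemma nonneg_im_zero {c : ℂ} (h : 0 ≤ c) : (c.im = 0) ∧ 0 ≤ c.re := by
  rw [Complex.le_def] at h
  exact ⟨by simpa using h.2.symm, by simpa using h.1⟩

lemma minTensor_im_zero {ρ : (A ⊗[ℂ] B) →ₗ[ℂ] ℂ} (hρ : ρ ∈ minTensorStates A B) :
    ∀ z ∈ saSpan A B, (ρ z).im = 0 := by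
  apply im_zero_on_saSpan
  intro a b ha hb
  obtain ⟨x, x', hx⟩ := sq_decomp a ha
  obtain ⟨y, y', hy⟩ := sq_decomp b hb
  have expand : a ⊗ₜ[ℂ] b =
      (star x * x) ⊗ₜ[ℂ] (star y * y) - (star x * x) ⊗ₜ[ℂ] (star y' * y')
      - (star x' * x') ⊗ₜ[ℂ] (star y * y) + (star x' * x') ⊗ₜ[ℂ] (star y' * y') := by
    rw [hx, hy, TensorProduct.sub_tmul, TensorProduct.tmul_sub, TensorProduct.tmul_sub]
    abel
  have h1 := (nonneg_im_zero (hρ.2 _ (star_mul_self_tmul_mem_hatCone x y))).1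
  have h2 := (nonneg_im_zero (hρ.2 _ (star_mul_self_tmul_mem_hatCone x y'))).1
  have h3 := (nonneg_im_zero (hρ.2 _ (star_mul_self_tmul_mem_hatCone x' y))).1
  have h4 := (nonneg_im_zero (hρ.2 _ (star_mul_self_tmul_mem_hatCone x' y'))).1
  rw [expand, map_add, map_sub, map_sub]
  simp [Complex.add_im, Complex.sub_im, h1, h2, h3, h4]

lemma prodState_im_zero {φ : A →ₗ[ℂ] ℂ} {ψ : B →ₗ[ℂ] ℂ}
    (hφ : φ ∈ states A) (hψ : ψ ∈ states B) :
    ∀ z ∈ saSpan A B, (prodFunctional A B φ ψ z).im = 0 := by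
  apply im_zero_on_saSpan
  intro a b ha hb
  rw [prodFunctional_tmul, Complex.mul_im, state_im hφ.1 hφ.2 ha, state_im hψ.1 hψ.2 hb]
  ring

lemma one_mem_saSpan : (1 : A ⊗[ℂ] B) ∈ saSpan A B :=
  Submodule.subset_span ⟨1, 1, IsSelfAdjoint.one A, IsSelfAdjoint.one B,
    Algebra.TensorProduct.one_def⟩

end CStarNP

/-- For unital C*-algebras `A` and `B`, the minimal Namioka–Phelps tensor
product of the state spaces equals the set of separable states on `A ⊗ B`, both being
identified with sets of linear functionals on the algebraic tensor product. -/
theorem minTensorStates_eq_sepStates (A B : Type*) [CStarAlgebra A] [CStarAlgebra B] :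
    CStarNP.minTensorStates A B = CStarNP.sepStates A B := by
  classical
  set T : Set ((A ⊗[ℂ] B) → ℂ) := {g | g 1 = 1 ∧ ∀ z ∈ CStarNP.hatCone A B, 0 ≤ g z} with hT
  have hTclosed : IsClosed T := by
    have h1 : IsClosed {g : (A ⊗[ℂ] B) → ℂ | g 1 = 1} :=
      isClosed_eq (continuous_apply 1) continuous_const
    have h2 : IsClosed {c : ℂ | 0 ≤ c} := by
      have : {c : ℂ | 0 ≤ c} = Complex.re ⁻¹' Set.Ici 0 ∩ Complex.im ⁻¹' {0} := by
        ext c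
        simp [Complex.le_def, eq_comm]
      rw [this]
      exact (isClosed_Ici.preimage Complex.continuous_re).inter
        (isClosed_singleton.preimage Complex.continuous_im)
    have : T = {g : (A ⊗[ℂ] B) → ℂ | g 1 = 1} ∩
        ⋂ z ∈ CStarNP.hatCone A B, (fun g : (A ⊗[ℂ] B) → ℂ => g z) ⁻¹' {c | 0 ≤ c} := by
      ext g
      simp only [hT, Set.mem_setOf_eq, Set.mem_inter_iff, Set.mem_iInter, Set.mem_preimage]
    rw [this]
    exact h1.inter (isClosed_biInter fun z _ => h2.preimage (continuous_apply z))
  have hTconv : Convex ℝ T := by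
    intro g hg g' hg' a b ha hb hab
    constructor
    · show a • g 1 + b • g' 1 = 1
      rw [hg.1, hg'.1, Complex.real_smul, Complex.real_smul, mul_one, mul_one,
        ← Complex.ofReal_add, hab, Complex.ofReal_one]
    · intro z hz
      show 0 ≤ a • g z + b • g' z
      rw [Complex.real_smul, Complex.real_smul]
      have hca : 0 ≤ (a : ℂ) := by rw [Complex.le_def]; simp [ha]
      have hcb : 0 ≤ (b : ℂ) := by rw [Complex.le_def]; simp [hb]
      exact add_nonneg (mul_nonneg hca (hg.2 z hz)) (mul_nonneg hcb (hg'.2 z hz))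
  have hsub : CStarNP.prodStateFns A B ⊆ T := by
    rintro g ⟨φ, hφ, ψ, hψ, rfl⟩
    exact ⟨CStarNP.prodFunctional_one hφ.1 hψ.1, fun z hz => hz.2 φ hφ ψ hψ⟩
  ext ρ
  constructor
  · -- minTensorStates ⊆ sepStates
    intro hρ
    by_contra hne
    have hSconv : Convex ℝ (closure (convexHull ℝ (CStarNP.prodStateFns A B))) :=
      (convex_convexHull ℝ _).closure
    have hSclosed : IsClosed (closure (convexHull ℝ (CStarNP.prodStateFns A B))) :=
      isClosed_closure
    obtain ⟨f, u, hfu, hub⟩ := geometric_hahn_banach_point_closed hSconv hSclosed hne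
    obtain ⟨s, w, hw⟩ := CStarNP.pi_clm_rep f
    set z₀ : A ⊗[ℂ] B := ∑ i ∈ s, w i • i with hz₀
    have hrep : ∀ σ : (A ⊗[ℂ] B) →ₗ[ℂ] ℂ, f ⇑σ = (σ z₀).re := by
      intro σ
      rw [hw, hz₀, map_sum, Complex.re_sum]
      exact Finset.sum_congr rfl fun i _ => by rw [map_smul, smul_eq_mul]
    obtain ⟨wz, vz, hwz, hvz, hzdec⟩ := CStarNP.exists_sa_decomp (-z₀)
    -- the element (-u) • 1 - wz lies in the hat cone
    have hcone : (-u) • (1 : A ⊗[ℂ] B) - wz ∈ CStarNP.hatCone A B := by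
      constructor
      · exact sub_mem (Submodule.smul_mem _ _ CStarNP.one_mem_saSpan) hwz
      · intro φ hφ ψ hψ
        set σ := CStarNP.prodFunctional A B φ ψ with hσ
        have hσS : ⇑σ ∈ closure (convexHull ℝ (CStarNP.prodStateFns A B)) :=
          subset_closure (subset_convexHull ℝ _ ⟨φ, hφ, ψ, hψ, rfl⟩)
        have him : (σ vz).im = 0 := CStarNP.prodState_im_zero hφ hψ vz hvz
        have himw : (σ wz).im = 0 := CStarNP.prodState_im_zero hφ hψ wz hwz
        have hlt : u < (σ z₀).re := by rw [← hrep σ]; exact hub _ hσS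
        have hre : (σ wz).re = -(σ z₀).re := by
          have : σ (-z₀) = σ wz + Complex.I * σ vz := by
            rw [hzdec, map_add, map_smul, smul_eq_mul]
          have h2 := congrArg Complex.re this
          rw [map_neg] at h2
          simp only [Complex.neg_re, Complex.add_re, Complex.mul_re, Complex.I_re,
            Complex.I_im, him] at h2
          linarith
        have hval : σ ((-u) • (1 : A ⊗[ℂ] B) - wz) = (-u : ℂ) - σ wz := by
          rw [map_sub, LinearMap.map_smul_of_tower, CStarNP.prodFunctional_one hφ.1 hψ.1]
          norm_num [Complex.real_smul]
        rw [hval, Complex.le_def]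
        constructor
        · simp only [Complex.zero_re, Complex.sub_re, Complex.neg_re, Complex.ofReal_re, hre]
          linarith
        · simp [himw]
    have hρpos := hρ.2 _ hcone
    have hρval : ρ ((-u) • (1 : A ⊗[ℂ] B) - wz) = (-u : ℂ) - ρ wz := by
      rw [map_sub, LinearMap.map_smul_of_tower, hρ.1]
      norm_num [Complex.real_smul]
    have himv : (ρ vz).im = 0 := CStarNP.minTensor_im_zero hρ vz hvz
    have hrelt : u > (ρ z₀).re := by rw [← hrep ρ]; exact hfu
    have hre : (ρ wz).re = -(ρ z₀).re := by
      have : ρ (-z₀) = ρ wz + Complex.I * ρ vz := by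
        rw [hzdec, map_add, map_smul, smul_eq_mul]
      have h2 := congrArg Complex.re this
      rw [map_neg] at h2
      simp only [Complex.neg_re, Complex.add_re, Complex.mul_re, Complex.I_re,
        Complex.I_im, himv] at h2
      linarith
    rw [hρval, Complex.le_def] at hρpos
    have := hρpos.1
    simp only [Complex.zero_re, Complex.sub_re, Complex.neg_re, Complex.ofReal_re, hre] at this
    linarith
  · -- sepStates ⊆ minTensorStates
    intro hρ
    have hTmem : ⇑ρ ∈ T :=
      closure_minimal (convexHull_min hsub hTconv) hTclosed hρ
    exact ⟨hTmem.1, hTmem.2⟩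
end

section
/- Let n, m ≥ 2 be integers. Then S(M_n(ℂ)) ⊗^* S(M_m(ℂ)) = {ρ₀^(m) ∘ (Φ ⊗ id_m) : Φ a positive linear map M_n(ℂ) → M_m(ℂ) with tr(Φ(I_n)) = 1} = {ρ ∘ (Φ ⊗ id_m) : Φ a unital positive linear map M_n(ℂ) → M_m(ℂ), ρ a state on M_m(ℂ) ⊗ M_m(ℂ)}, where ρ₀^(m) is the maximally entangled state on M_m(ℂ) ⊗ M_m(ℂ) and tr is the normalized trace. -/
open scoped TensorProduct ComplexOrder ENNReal

namespace CStarNP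

/-- The matrix-entry functional `M ↦ M i j`. -/
def entryFn {m : ℕ} (i j : Fin m) : Matrix (Fin m) (Fin m) ℂ →ₗ[ℂ] ℂ where
  toFun M := M i j
  map_add' _ _ := rfl
  map_smul' _ _ := rfl

open scoped Matrix.Norms.L2Operator

noncomputable instance matrixCStarAlgebra (n : Type*) [Fintype n] [DecidableEq n] :
    CStarAlgebra (Matrix n n ℂ) where

/-- The maximally entangled state `ρ₀^(m)` on `M_m(ℂ) ⊗ M_m(ℂ)`, the vector state associated
with the unit vector `m^{-1/2} ∑ e_j ⊗ e_j`; it sends `S ⊗ T` to `m⁻¹ ∑_{i,j} S i j * T i j`. -/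
noncomputable def maxEntangledState (m : ℕ) :
    (Matrix (Fin m) (Fin m) ℂ ⊗[ℂ] Matrix (Fin m) (Fin m) ℂ) →ₗ[ℂ] ℂ :=
  (m : ℂ)⁻¹ •
    ∑ i : Fin m, ∑ j : Fin m,
      prodFunctional (Matrix (Fin m) (Fin m) ℂ) (Matrix (Fin m) (Fin m) ℂ)
        (entryFn i j) (entryFn i j)

end CStarNP

namespace Aux
open Matrix
variable {k : ℕ}

def outer {k : ℕ} (x : Fin k → ℂ) : Matrix (Fin k) (Fin k) ℂ :=
  Matrix.of fun i j => star (x i) * x j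

open scoped MatrixOrder in
lemma psd_exists_ct {M : Matrix (Fin k) (Fin k) ℂ} (h : M.PosSemidef) : ∃ B : Matrix (Fin k) (Fin k) ℂ, M = Bᴴ * B := by
  obtain ⟨B, hB⟩ := CStarAlgebra.nonneg_iff_eq_star_mul_self.mp h.nonneg
  exact ⟨B, hB⟩

lemma outer_posSemidef (x : Fin k → ℂ) : (outer x).PosSemidef := by
  have h : outer x = (Matrix.replicateRow (Fin 1) x)ᴴ * Matrix.replicateRow (Fin 1) x := by
    ext i j
    simp [outer, Matrix.mul_apply, Matrix.row]
  rw [h]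
  exact Matrix.posSemidef_conjTranspose_mul_self _

noncomputable def pairing (N b : Matrix (Fin k) (Fin k) ℂ) : ℂ := ∑ i, ∑ j, N i j * b i j

lemma pairing_eq_trace (N b : Matrix (Fin k) (Fin k) ℂ) : pairing N b = (Nᵀ * b).trace := by
  simp only [pairing, Matrix.trace, Matrix.diag, Matrix.mul_apply, Matrix.transpose_apply]
  rw [Finset.sum_comm]

lemma trace_psd_nonneg {M : Matrix (Fin k) (Fin k) ℂ} (h : M.PosSemidef) : 0 ≤ M.trace := by
  have : ∀ i, 0 ≤ M i i := by
    intro i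
    have := h.dotProduct_mulVec_nonneg (Pi.single i 1)
    simpa [Matrix.mulVec_single, dotProduct, Pi.single_apply, apply_ite] using this
  exact Finset.sum_nonneg fun i _ => this i

lemma pairing_nonneg {N b : Matrix (Fin k) (Fin k) ℂ} (hN : N.PosSemidef) (hb : b.PosSemidef) :
    0 ≤ pairing N b := by
  obtain ⟨B, rfl⟩ := Aux.psd_exists_ct hb
  rw [pairing_eq_trace, ← Matrix.mul_assoc, Matrix.trace_mul_comm, ← Matrix.mul_assoc]
  exact trace_psd_nonneg (hN.transpose.mul_mul_conjTranspose_same B)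

lemma pairing_outer (N : Matrix (Fin k) (Fin k) ℂ) (x : Fin k → ℂ) :
    pairing N (outer x) = star x ⬝ᵥ N *ᵥ x := by
  simp only [pairing, outer, dotProduct, Matrix.mulVec, Matrix.of_apply, Pi.star_apply,
    Finset.mul_sum, Finset.sum_mul]
  exact Finset.sum_congr rfl fun i _ => Finset.sum_congr rfl fun j _ => by ring


variable {k : ℕ}

lemma quad_single (N : Matrix (Fin k) (Fin k) ℂ) (i j : Fin k) :
    star (Pi.single i 1 : Fin k → ℂ) ⬝ᵥ N *ᵥ (Pi.single j 1 : Fin k → ℂ) = N i j := by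
  have hs : star (Pi.single i 1 : Fin k → ℂ) = Pi.single i 1 := by
    funext a; by_cases h : a = i <;> simp [Pi.single_apply, h]
  rw [hs, Matrix.mulVec_single, single_dotProduct]
  simp

lemma quad_single' (N : Matrix (Fin k) (Fin k) ℂ) (i j : Fin k) :
    (Pi.single i 1 : Fin k → ℂ) ⬝ᵥ N *ᵥ (Pi.single j 1 : Fin k → ℂ) = N i j := by
  rw [Matrix.mulVec_single, single_dotProduct]
  simp

lemma isHermitian_of_quad_real (N : Matrix (Fin k) (Fin k) ℂ)
    (h : ∀ x : Fin k → ℂ, (star x ⬝ᵥ N *ᵥ x).im = 0) : N.IsHermitian := by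
  have bil : ∀ x y : Fin k → ℂ, star (x + y) ⬝ᵥ N *ᵥ (x + y)
      = star x ⬝ᵥ N *ᵥ x + star x ⬝ᵥ N *ᵥ y + star y ⬝ᵥ N *ᵥ x + star y ⬝ᵥ N *ᵥ y := by
    intro x y
    simp only [star_add, Matrix.mulVec_add, add_dotProduct, dotProduct_add]
    ring
  ext i j
  rw [Matrix.conjTranspose_apply]
  have hsm : star (Complex.I • (Pi.single j 1 : Fin k → ℂ))
      = (-Complex.I) • (Pi.single j 1 : Fin k → ℂ) := by
    have h0 : star (Complex.I • (Pi.single j 1 : Fin k → ℂ))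
        = (starRingEnd ℂ) Complex.I • star (Pi.single j 1 : Fin k → ℂ) := by
      rw [star_smul]; rfl
    rw [h0, Complex.conj_I]
    congr 1
    funext a; by_cases ha : a = j <;> simp [Pi.single_apply, ha]
  have h1 := h ((Pi.single i 1 : Fin k → ℂ) + (Pi.single j 1 : Fin k → ℂ))
  rw [bil, quad_single, quad_single, quad_single, quad_single] at h1
  have h2 := h ((Pi.single i 1 : Fin k → ℂ) + Complex.I • (Pi.single j 1 : Fin k → ℂ))
  rw [bil] at h2
  have e1 : star (Pi.single i 1 : Fin k → ℂ) ⬝ᵥ N *ᵥ (Complex.I • (Pi.single j 1 : Fin k → ℂ))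
      = Complex.I * N i j := by
    rw [Matrix.mulVec_smul, dotProduct_smul, quad_single]; simp [smul_eq_mul]
  have e2 : star (Complex.I • (Pi.single j 1 : Fin k → ℂ)) ⬝ᵥ N *ᵥ (Pi.single i 1 : Fin k → ℂ)
      = -Complex.I * N j i := by
    rw [hsm, smul_dotProduct, quad_single']; simp [smul_eq_mul]
  have e3 : star (Complex.I • (Pi.single j 1 : Fin k → ℂ)) ⬝ᵥ N *ᵥ
      (Complex.I • (Pi.single j 1 : Fin k → ℂ)) = N j j := by
    rw [hsm, Matrix.mulVec_smul, dotProduct_smul, smul_dotProduct, quad_single']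
    simp only [smul_eq_mul]; ring_nf; simp [Complex.I_sq]
  rw [e1, e2, e3, quad_single] at h2
  have hi := h (Pi.single i 1 : Fin k → ℂ); have hj := h (Pi.single j 1 : Fin k → ℂ)
  rw [quad_single] at hi; rw [quad_single] at hj
  simp only [Complex.add_im, Complex.mul_im, Complex.neg_re, Complex.neg_im, Complex.I_re,
    Complex.I_im] at h1 h2
  have hstar : star (N j i) = (starRingEnd ℂ) (N j i) := rfl
  rw [hstar]
  apply Complex.ext
  · rw [Complex.conj_re]; nlinarith [h1, h2, hi, hj]
  · rw [Complex.conj_im]; nlinarith [h1, h2, hi, hj]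


variable {k : ℕ}
set_option maxRecDepth 10000 in
lemma stdBasis_combo (i j : Fin k) :
    Matrix.single i j (1:ℂ) =
      (1/2 : ℂ) • outer ((Pi.single i 1 : Fin k → ℂ) + (Pi.single j 1 : Fin k → ℂ))
      - (Complex.I/2) • outer ((Pi.single i 1 : Fin k → ℂ) + Complex.I • (Pi.single j 1 : Fin k → ℂ))
      - ((1 - Complex.I)/2) • outer (Pi.single i 1 : Fin k → ℂ)
      - ((1 - Complex.I)/2) • outer (Pi.single j 1 : Fin k → ℂ) := by
  ext a b
  by_cases hai : a = i <;> by_cases haj : a = j <;> by_cases hbi : b = i <;> by_cases hbj : b = j <;>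
    simp_all [outer, Matrix.single, Pi.single_apply, eq_comm, Complex.ext_iff] <;>
    norm_num

lemma ext_of_psd {V : Type*} [AddCommGroup V] [Module ℂ V]
    (L₁ L₂ : Matrix (Fin k) (Fin k) ℂ →ₗ[ℂ] V)
    (h : ∀ M : Matrix (Fin k) (Fin k) ℂ, M.PosSemidef → L₁ M = L₂ M) : L₁ = L₂ := by
  ext M
  have hM : M = ∑ i : Fin k, ∑ j : Fin k, (M i j) • Matrix.single i j (1:ℂ) := by
    conv_lhs => rw [matrix_eq_sum_single M]
    refine Finset.sum_congr rfl fun i _ => Finset.sum_congr rfl fun j _ => ?_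
    rw [smul_single, smul_eq_mul, mul_one]
  rw [hM]
  simp only [map_sum, _root_.map_smul]
  refine Finset.sum_congr rfl fun i _ => Finset.sum_congr rfl fun j _ => ?_
  congr 1
  rw [stdBasis_combo]
  simp only [map_sub, _root_.map_smul, h _ (outer_posSemidef _)]


variable {k : ℕ}

section spectral
variable {q : Matrix (Fin k) (Fin k) ℂ} (hq : q.PosSemidef)

noncomputable def conjD (hq : q.PosSemidef) (f : Fin k → ℂ) : Matrix (Fin k) (Fin k) ℂ :=
  (hq.1.eigenvectorUnitary : Matrix (Fin k) (Fin k) ℂ) * diagonal f *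
    (star hq.1.eigenvectorUnitary : Matrix (Fin k) (Fin k) ℂ)

lemma unit_mul_star : (hq.1.eigenvectorUnitary : Matrix (Fin k) (Fin k) ℂ) *
    (star hq.1.eigenvectorUnitary : Matrix (Fin k) (Fin k) ℂ) = 1 :=
  Matrix.mem_unitaryGroup_iff.mp hq.1.eigenvectorUnitary.2

lemma star_mul_unit : (star hq.1.eigenvectorUnitary : Matrix (Fin k) (Fin k) ℂ) *
    (hq.1.eigenvectorUnitary : Matrix (Fin k) (Fin k) ℂ) = 1 :=
  Matrix.mem_unitaryGroup_iff'.mp hq.1.eigenvectorUnitary.2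

lemma star_unit_cancel (X : Matrix (Fin k) (Fin k) ℂ) :
    (star hq.1.eigenvectorUnitary : Matrix (Fin k) (Fin k) ℂ) *
      ((hq.1.eigenvectorUnitary : Matrix (Fin k) (Fin k) ℂ) * X) = X := by
  rw [← Matrix.mul_assoc, star_mul_unit hq, Matrix.one_mul]

lemma conjD_mul (f g : Fin k → ℂ) : conjD hq f * conjD hq g = conjD hq (f * g) := by
  unfold conjD
  simp only [Matrix.mul_assoc, star_unit_cancel hq]
  rw [← Matrix.mul_assoc (diagonal f), Matrix.diagonal_mul_diagonal]
  rfl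

lemma conjD_psd {f : Fin k → ℂ} (hf : ∀ i, 0 ≤ f i) : (conjD hq f).PosSemidef := by
  unfold conjD
  rw [show (star hq.1.eigenvectorUnitary : Matrix (Fin k) (Fin k) ℂ)
    = (hq.1.eigenvectorUnitary : Matrix (Fin k) (Fin k) ℂ)ᴴ from rfl]
  exact (Matrix.PosSemidef.diagonal hf).mul_mul_conjTranspose_same _

lemma conjD_sub (f g : Fin k → ℂ) : conjD hq f - conjD hq g = conjD hq (f - g) := by
  unfold conjD
  rw [← Matrix.sub_mul, ← Matrix.mul_sub, Matrix.diagonal_sub]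
  rfl

lemma conjD_one : conjD hq (fun _ => 1) = 1 := by
  unfold conjD
  rw [show (Matrix.diagonal (fun _ : Fin k => (1:ℂ))) = 1 from Matrix.diagonal_one,
    Matrix.mul_one, unit_mul_star hq]

lemma conjD_smul (c : ℂ) (f : Fin k → ℂ) : c • conjD hq f = conjD hq (c • f) := by
  unfold conjD
  rw [← Matrix.smul_mul, ← Matrix.mul_smul, ← Matrix.diagonal_smul]

lemma conjD_q : conjD hq (fun i => (hq.1.eigenvalues i : ℂ)) = q := by
  have := hq.1.spectral_theorem
  rw [Unitary.conjStarAlgAut_apply] at this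
  unfold conjD
  exact this.symm

end spectral

variable {k : ℕ}

lemma trace_eq_sum_eig {M : Matrix (Fin k) (Fin k) ℂ} (hM : M.IsHermitian) :
    M.trace = ∑ i, (hM.eigenvalues i : ℂ) := by
  conv_lhs => rw [hM.spectral_theorem, Unitary.conjStarAlgAut_apply]
  rw [Matrix.trace_mul_cycle, Matrix.mem_unitaryGroup_iff'.mp hM.eigenvectorUnitary.2,
    Matrix.one_mul, Matrix.trace_diagonal]
  simp

lemma psd_le_trace {M : Matrix (Fin k) (Fin k) ℂ} (hM : M.PosSemidef) :
    ((M.trace) • (1 : Matrix (Fin k) (Fin k) ℂ) - M).PosSemidef := by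
  have h1 : (1 : Matrix (Fin k) (Fin k) ℂ) =
      (hM.1.eigenvectorUnitary : Matrix (Fin k) (Fin k) ℂ) * diagonal (fun _ => 1) *
      (star hM.1.eigenvectorUnitary : Matrix (Fin k) (Fin k) ℂ) := by
    rw [show (Matrix.diagonal (fun _ : Fin k => (1:ℂ))) = 1 from Matrix.diagonal_one,
      Matrix.mul_one, Matrix.mem_unitaryGroup_iff.mp hM.1.eigenvectorUnitary.2]
  have h2 : (M.trace) • (1 : Matrix (Fin k) (Fin k) ℂ) - M =
      (hM.1.eigenvectorUnitary : Matrix (Fin k) (Fin k) ℂ) *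
        diagonal (fun i => M.trace - (hM.1.eigenvalues i : ℂ)) *
      (star hM.1.eigenvectorUnitary : Matrix (Fin k) (Fin k) ℂ) := by
    have hd : (diagonal (fun i => M.trace - (hM.1.eigenvalues i : ℂ)))
        = M.trace • diagonal (fun _ => (1:ℂ)) - diagonal (fun i => (hM.1.eigenvalues i : ℂ)) := by
      rw [← Matrix.diagonal_smul, Matrix.diagonal_sub]
      congr 1; funext i; simp
    rw [hd, Matrix.mul_sub, Matrix.sub_mul, Matrix.mul_smul, Matrix.smul_mul]
    congr 1
    · rw [show (Matrix.diagonal (fun _ : Fin k => (1:ℂ))) = 1 from Matrix.diagonal_one,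
        Matrix.mul_one, Matrix.mem_unitaryGroup_iff.mp hM.1.eigenvectorUnitary.2]
    · exact hM.1.spectral_theorem
  rw [h2, show (star hM.1.eigenvectorUnitary : Matrix (Fin k) (Fin k) ℂ)
    = (hM.1.eigenvectorUnitary : Matrix (Fin k) (Fin k) ℂ)ᴴ from rfl]
  refine (Matrix.PosSemidef.diagonal fun i => ?_).mul_mul_conjTranspose_same _
  simp only [Pi.zero_apply]
  rw [trace_eq_sum_eig hM.1]
  have : (∑ j, (hM.1.eigenvalues j : ℂ)) - (hM.1.eigenvalues i : ℂ)
      = ((∑ j, hM.1.eigenvalues j - hM.1.eigenvalues i : ℝ) : ℂ) := by push_cast; ring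
  rw [this]
  rw [Complex.zero_le_real]
  have := Finset.sum_le_sum (s := Finset.univ) (fun j (_ : j ∈ Finset.univ) => le_refl (hM.1.eigenvalues j))
  have hsingle : hM.1.eigenvalues i ≤ ∑ j, hM.1.eigenvalues j :=
    Finset.single_le_sum (fun j _ => hM.eigenvalues_nonneg j) (Finset.mem_univ i)
  linarith

lemma psd_mul_eq_zero {N P : Matrix (Fin k) (Fin k) ℂ} (hN : N.PosSemidef) (hP : P.IsHermitian)
    (h : P * N * P = 0) : N * P = 0 := by
  obtain ⟨Bm, rfl⟩ := Aux.psd_exists_ct hN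
  have key : (Bm * P)ᴴ * (Bm * P) = 0 := by
    rw [Matrix.conjTranspose_mul, hP]
    calc P * Bmᴴ * (Bm * P) = P * (Bmᴴ * Bm) * P := by
          rw [Matrix.mul_assoc, Matrix.mul_assoc, Matrix.mul_assoc]
      _ = 0 := h
  have hBP : Bm * P = 0 := Matrix.trace_conjTranspose_mul_self_eq_zero_iff.mp (by rw [key, Matrix.trace_zero])
  rw [Matrix.mul_assoc, hBP, Matrix.mul_zero]

lemma collapse {N P : Matrix (Fin k) (Fin k) ℂ} (hN : N.PosSemidef) (hP : P.IsHermitian)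
    (h0 : (1 - P) * N * (1 - P) = 0) : P * N * P = N := by
  have h1P : (1 - P : Matrix (Fin k) (Fin k) ℂ).IsHermitian := Matrix.isHermitian_one.sub hP
  have hNP : N * (1 - P) = 0 := psd_mul_eq_zero hN h1P h0
  have hPN : P * N = N := by
    have := congrArg Matrix.conjTranspose hNP
    rw [Matrix.conjTranspose_mul, hN.1, h1P, Matrix.conjTranspose_zero] at this
    rw [Matrix.sub_mul, Matrix.one_mul, sub_eq_zero] at this
    exact this.symm
  have hNP' : N * P = N := by
    rw [Matrix.mul_sub, Matrix.mul_one, sub_eq_zero] at hNP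
    exact hNP.symm
  rw [hPN, hNP']


variable {k : ℕ}

-- placeholders from previous files
lemma posSemidef_of_pairing (N : Matrix (Fin k) (Fin k) ℂ)
    (h : ∀ b : Matrix (Fin k) (Fin k) ℂ, b.PosSemidef → 0 ≤ pairing N b) : N.PosSemidef := by
  have key : ∀ x : Fin k → ℂ, 0 ≤ star x ⬝ᵥ N *ᵥ x := fun x => by
    rw [← pairing_outer]; exact h _ (outer_posSemidef x)
  refine .of_dotProduct_mulVec_nonneg (isHermitian_of_quad_real N fun x => ?_) key
  have := (Complex.le_def.mp (key x)).2
  simpa using this.symm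

lemma psd_smul {M : Matrix (Fin k) (Fin k) ℂ} {c : ℂ} (hc : 0 ≤ c) (hM : M.PosSemidef) :
    (c • M).PosSemidef := by
  have hcr : star c = c := by
    have him : c.im = 0 := by simpa using (Complex.le_def.mp hc).2.symm
    apply Complex.ext <;> simp [him]
  refine .of_dotProduct_mulVec_nonneg ?_ ?_
  · rw [Matrix.IsHermitian, Matrix.conjTranspose_smul, hcr, hM.1]
  · intro x
    rw [Matrix.smul_mulVec, dotProduct_smul, smul_eq_mul]
    exact mul_nonneg hc (hM.dotProduct_mulVec_nonneg x)

lemma psd_neg_eq_zero {S : Matrix (Fin k) (Fin k) ℂ} (h1 : S.PosSemidef)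
    (h2 : (-S).PosSemidef) : S = 0 := by
  have hz : ∀ x : Fin k → ℂ, S *ᵥ x = 0 := by
    intro x
    rw [← h1.dotProduct_mulVec_zero_iff]
    refine le_antisymm ?_ (h1.dotProduct_mulVec_nonneg x)
    have := h2.dotProduct_mulVec_nonneg x
    rw [Matrix.neg_mulVec, dotProduct_neg] at this
    exact neg_nonneg.mp this
  ext i j
  have := congrFun (hz (Pi.single j 1)) i
  rw [Matrix.mulVec_single] at this
  simpa using this



section Tensor
open CStarNP

abbrev MatC (k : ℕ) := Matrix (Fin k) (Fin k) ℂ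

variable {n m : ℕ}

lemma inv_nat_nonneg (m : ℕ) : (0:ℂ) ≤ ((m:ℂ))⁻¹ := by
  have : ((m:ℂ))⁻¹ = (((m:ℝ)⁻¹ : ℝ) : ℂ) := by push_cast; ring
  rw [this, Complex.zero_le_real]
  positivity

lemma nat_nonneg (m : ℕ) : (0:ℂ) ≤ (m:ℂ) := by
  have : ((m:ℂ)) = (((m:ℝ) : ℝ) : ℂ) := by push_cast; ring
  rw [this, Complex.zero_le_real]
  positivity

lemma maxEnt_tmul (m : ℕ) (S T : MatC m) :
    CStarNP.maxEntangledState m (S ⊗ₜ[ℂ] T) = (m:ℂ)⁻¹ * pairing S T := by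
  simp only [CStarNP.maxEntangledState, CStarNP.prodFunctional, CStarNP.entryFn, pairing,
    LinearMap.smul_apply, LinearMap.coe_sum, Finset.sum_apply, LinearMap.coe_comp,
    Function.comp_apply, TensorProduct.map_tmul, LinearEquiv.coe_coe, TensorProduct.lid_tmul,
    LinearMap.coe_mk, AddHom.coe_mk, smul_eq_mul, Finset.mul_sum]
  rfl

noncomputable def toMap (m : ℕ) (ρ : (MatC n ⊗[ℂ] MatC m) →ₗ[ℂ] ℂ) :
    MatC n →ₗ[ℂ] MatC m where
  toFun S := Matrix.of fun i j => (m:ℂ) * ρ (S ⊗ₜ[ℂ] Matrix.single i j 1)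
  map_add' S S' := by
    ext i j
    simp [TensorProduct.add_tmul, mul_add]
  map_smul' c S := by
    ext i j
    have h : ((c • S) ⊗ₜ[ℂ] (Matrix.single i j (1:ℂ)))
        = c • (S ⊗ₜ[ℂ] Matrix.single i j 1) := (TensorProduct.smul_tmul' c S _).symm
    simp [h]
    ring

lemma tmul_decomp (ρ : (MatC n ⊗[ℂ] MatC m) →ₗ[ℂ] ℂ) (S : MatC n) (T : MatC m) :
    ρ (S ⊗ₜ[ℂ] T) = ∑ i, ∑ j, T i j * ρ (S ⊗ₜ[ℂ] Matrix.single i j 1) := by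
  have hT : S ⊗ₜ[ℂ] T = ∑ i, ∑ j, T i j • (S ⊗ₜ[ℂ] Matrix.single i j (1:ℂ)) := by
    conv_lhs => rw [Matrix.matrix_eq_sum_single T]
    rw [TensorProduct.tmul_sum]
    refine Finset.sum_congr rfl fun i _ => ?_
    rw [TensorProduct.tmul_sum]
    refine Finset.sum_congr rfl fun j _ => ?_
    rw [← TensorProduct.tmul_smul, Matrix.smul_single, smul_eq_mul, mul_one]
  rw [hT, map_sum]
  refine Finset.sum_congr rfl fun i _ => ?_
  rw [map_sum]
  refine Finset.sum_congr rfl fun j _ => ?_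
  rw [_root_.map_smul, smul_eq_mul]

lemma pairing_toMap (ρ : (MatC n ⊗[ℂ] MatC m) →ₗ[ℂ] ℂ) (S : MatC n) (T : MatC m) :
    pairing (toMap m ρ S) T = (m:ℂ) * ρ (S ⊗ₜ[ℂ] T) := by
  rw [tmul_decomp ρ S T, Finset.mul_sum]
  refine Finset.sum_congr rfl fun i _ => ?_
  rw [Finset.mul_sum]
  refine Finset.sum_congr rfl fun j _ => ?_
  simp only [pairing, toMap, LinearMap.coe_mk, AddHom.coe_mk, Matrix.of_apply]
  ring

lemma comp_toMap (hm : (m:ℂ) ≠ 0) (ρ : (MatC n ⊗[ℂ] MatC m) →ₗ[ℂ] ℂ) :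
    CStarNP.maxEntangledState m ∘ₗ TensorProduct.map (toMap m ρ) LinearMap.id = ρ := by
  apply TensorProduct.ext'
  intro S T
  rw [LinearMap.comp_apply, TensorProduct.map_tmul, LinearMap.id_coe, id_eq, maxEnt_tmul,
    pairing_toMap]
  rw [← mul_assoc, inv_mul_cancel₀ hm, one_mul]

lemma sum_std_diag : (∑ i : Fin m, Matrix.single i i (1:ℂ)) = 1 := by
  ext a b
  simp only [Matrix.sum_apply, Matrix.single, Matrix.of_apply, Matrix.one_apply]
  by_cases h : a = b
  · subst h
    simp
  · rw [Finset.sum_eq_zero, if_neg h]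
    intro i _
    rw [if_neg]
    rintro ⟨rfl, rfl⟩
    exact h rfl

lemma pairing_one (S : MatC m) : pairing S 1 = S.trace := by
  simp only [pairing, Matrix.one_apply, mul_ite, mul_one, mul_zero, Matrix.trace, Matrix.diag]
  refine Finset.sum_congr rfl fun i _ => ?_
  rw [Finset.sum_eq_single i]
  · simp
  · intro b _ hb; rw [if_neg (fun hh => hb hh.symm)]
  · intro hi; exact absurd (Finset.mem_univ i) hi

lemma trace_toMap (ρ : (MatC n ⊗[ℂ] MatC m) →ₗ[ℂ] ℂ) (S : MatC n) :
    (toMap m ρ S).trace = (m:ℂ) * ρ (S ⊗ₜ[ℂ] 1) := by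
  rw [← pairing_one, pairing_toMap]

lemma toMap_posSemidef (ρ : (MatC n ⊗[ℂ] MatC m) →ₗ[ℂ] ℂ)
    (hρ : ∀ (S : MatC n) (T : MatC m), S.PosSemidef → T.PosSemidef → 0 ≤ ρ (S ⊗ₜ[ℂ] T))
    {M : MatC n} (hM : M.PosSemidef) : (toMap m ρ M).PosSemidef := by
  apply posSemidef_of_pairing
  intro b hb
  rw [pairing_toMap]
  exact mul_nonneg (nat_nonneg m) (hρ _ _ hM hb)

lemma maxTensor_pos {ρ : (MatC n ⊗[ℂ] MatC m) →ₗ[ℂ] ℂ}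
    (h : ρ ∈ maxTensorStates (MatC n) (MatC m)) :
    ∀ (S : MatC n) (T : MatC m), S.PosSemidef → T.PosSemidef → 0 ≤ ρ (S ⊗ₜ[ℂ] T) := by
  intro S T hS hT
  obtain ⟨a, rfl⟩ := Aux.psd_exists_ct hS
  obtain ⟨b, rfl⟩ := Aux.psd_exists_ct hT
  have := h.2 a b
  rwa [Matrix.star_eq_conjTranspose, Matrix.star_eq_conjTranspose] at this

lemma ct_t {k : ℕ} (M : Matrix (Fin k) (Fin k) ℂ) : Mᵀᴴ = Mᴴᵀ := by ext i j; simp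

lemma trace_term (a₁ a₂ b₁ b₂ : MatC m) :
    pairing (a₁ᴴ * a₂) (b₁ᴴ * b₂) = ((b₁ * a₁ᵀ)ᴴ * (b₂ * a₂ᵀ)).trace := by
  rw [pairing_eq_trace]
  simp only [Matrix.conjTranspose_mul, Matrix.transpose_mul, ct_t, Matrix.mul_assoc]
  rw [Matrix.trace_mul_comm]
  simp only [Matrix.mul_assoc]

lemma maxEnt_algPos {N : ℕ} (a b : Fin N → MatC m) :
    0 ≤ CStarNP.maxEntangledState m
      (∑ i, ∑ j, (star (a i) * a j) ⊗ₜ[ℂ] (star (b i) * b j)) := by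
  rw [map_sum]
  simp only [map_sum, maxEnt_tmul, Matrix.star_eq_conjTranspose]
  simp only [trace_term]
  have key : (∑ i, ∑ j, ((b i * (a i)ᵀ)ᴴ * (b j * (a j)ᵀ)).trace)
      = ((∑ i, b i * (a i)ᵀ)ᴴ * (∑ j, b j * (a j)ᵀ)).trace := by
    rw [Matrix.conjTranspose_sum, Finset.sum_mul, Matrix.trace_sum]
    refine Finset.sum_congr rfl fun i _ => ?_
    rw [Finset.mul_sum, Matrix.trace_sum]
  simp_rw [← Finset.mul_sum]
  rw [key]
  exact mul_nonneg (inv_nat_nonneg m)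
    (trace_psd_nonneg (Matrix.posSemidef_conjTranspose_mul_self _))

end Tensor

section Supp
open Matrix
variable {k : ℕ} {q : Matrix (Fin k) (Fin k) ℂ} (hq : q.PosSemidef)

noncomputable def csqrt : Matrix (Fin k) (Fin k) ℂ :=
  conjD hq fun i => ((Real.sqrt (hq.1.eigenvalues i) : ℝ) : ℂ)
noncomputable def cpinv : Matrix (Fin k) (Fin k) ℂ :=
  conjD hq fun i => (((Real.sqrt (hq.1.eigenvalues i))⁻¹ : ℝ) : ℂ)
noncomputable def suppP : Matrix (Fin k) (Fin k) ℂ :=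
  conjD hq fun i => if hq.1.eigenvalues i = 0 then (0:ℂ) else 1

lemma csqrt_psd : (csqrt hq).PosSemidef :=
  conjD_psd hq fun i => Complex.zero_le_real.mpr (Real.sqrt_nonneg _)

lemma cpinv_psd : (cpinv hq).PosSemidef :=
  conjD_psd hq fun i => Complex.zero_le_real.mpr (by positivity)

lemma suppP_psd : (suppP hq).PosSemidef :=
  conjD_psd hq fun i => by split <;> norm_num

lemma csqrt_sq : csqrt hq * csqrt hq = q := by
  unfold csqrt
  rw [conjD_mul]
  have hfun : ((fun i => ((Real.sqrt (hq.1.eigenvalues i) : ℝ) : ℂ)) *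
      (fun i => ((Real.sqrt (hq.1.eigenvalues i) : ℝ) : ℂ))) = fun i => ((hq.1.eigenvalues i : ℝ) : ℂ) := by
    funext i
    rw [Pi.mul_apply, ← Complex.ofReal_mul, Real.mul_self_sqrt (hq.eigenvalues_nonneg i)]
  rw [hfun, conjD_q]

lemma csqrt_cpinv : csqrt hq * cpinv hq = suppP hq := by
  unfold csqrt cpinv suppP
  rw [conjD_mul]
  have hfun : ((fun i => ((Real.sqrt (hq.1.eigenvalues i) : ℝ) : ℂ)) *
      (fun i => (((Real.sqrt (hq.1.eigenvalues i))⁻¹ : ℝ) : ℂ)))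
      = fun i => if hq.1.eigenvalues i = 0 then (0:ℂ) else 1 := by
    funext i
    rw [Pi.mul_apply, ← Complex.ofReal_mul]
    by_cases h : hq.1.eigenvalues i = 0
    · simp [h]
    · rw [if_neg h, mul_inv_cancel₀ (fun hc =>
        h (Real.sqrt_eq_zero (hq.eigenvalues_nonneg i) |>.mp hc))]
      norm_num
  rw [hfun]

lemma cpinv_csqrt : cpinv hq * csqrt hq = suppP hq := by
  unfold csqrt cpinv suppP
  rw [conjD_mul]
  have hfun : ((fun i => (((Real.sqrt (hq.1.eigenvalues i))⁻¹ : ℝ) : ℂ)) *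
      (fun i => ((Real.sqrt (hq.1.eigenvalues i) : ℝ) : ℂ)))
      = fun i => if hq.1.eigenvalues i = 0 then (0:ℂ) else 1 := by
    funext i
    rw [Pi.mul_apply, ← Complex.ofReal_mul]
    by_cases h : hq.1.eigenvalues i = 0
    · simp [h]
    · rw [if_neg h, inv_mul_cancel₀ (fun hc =>
        h (Real.sqrt_eq_zero (hq.eigenvalues_nonneg i) |>.mp hc))]
      norm_num
  rw [hfun]

lemma suppP_sq : suppP hq * suppP hq = suppP hq := by
  unfold suppP
  rw [conjD_mul]
  have hfun : ((fun i => if hq.1.eigenvalues i = 0 then (0:ℂ) else 1) *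
      (fun i => if hq.1.eigenvalues i = 0 then (0:ℂ) else 1))
      = fun i => if hq.1.eigenvalues i = 0 then (0:ℂ) else 1 := by
    funext i
    rw [Pi.mul_apply]
    by_cases h : hq.1.eigenvalues i = 0 <;> simp [h]
  rw [hfun]

lemma cpinv_q_cpinv : cpinv hq * q * cpinv hq = suppP hq := by
  have h1 : cpinv hq * (csqrt hq * csqrt hq) * cpinv hq = suppP hq := by
    rw [← Matrix.mul_assoc, cpinv_csqrt hq, Matrix.mul_assoc, csqrt_cpinv hq, suppP_sq hq]
  rwa [csqrt_sq hq] at h1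

lemma csqrt_suppP : csqrt hq * suppP hq = csqrt hq := by
  unfold csqrt suppP
  rw [conjD_mul]
  have hfun : ((fun i => ((Real.sqrt (hq.1.eigenvalues i) : ℝ) : ℂ)) *
      (fun i => if hq.1.eigenvalues i = 0 then (0:ℂ) else 1))
      = fun i => ((Real.sqrt (hq.1.eigenvalues i) : ℝ) : ℂ) := by
    funext i
    rw [Pi.mul_apply]
    by_cases h : hq.1.eigenvalues i = 0 <;> simp [h]
  rw [hfun]

lemma csqrt_one_sub : csqrt hq * (1 - suppP hq) = 0 := by
  rw [Matrix.mul_sub, Matrix.mul_one, csqrt_suppP hq, sub_self]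

lemma one_sub_suppP_psd : ((1 : Matrix (Fin k) (Fin k) ℂ) - suppP hq).PosSemidef := by
  have h : (1 : Matrix (Fin k) (Fin k) ℂ) - suppP hq
      = conjD hq (fun i => 1 - (if hq.1.eigenvalues i = 0 then (0:ℂ) else 1)) := by
    rw [← conjD_one hq]
    unfold suppP
    rw [conjD_sub]
    rfl
  rw [h]
  exact conjD_psd hq fun i => by split <;> norm_num

lemma one_sub_q_one_sub : ((1 : Matrix (Fin k) (Fin k) ℂ) - suppP hq) * q *
    ((1 : Matrix (Fin k) (Fin k) ℂ) - suppP hq) = 0 := by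
  have hc : ((1 : Matrix (Fin k) (Fin k) ℂ) - suppP hq) * csqrt hq = 0 := by
    have := congrArg Matrix.conjTranspose (csqrt_one_sub hq)
    rwa [Matrix.conjTranspose_mul, (csqrt_psd hq).1, (one_sub_suppP_psd hq).1,
      Matrix.conjTranspose_zero] at this
  have h1 : ((1 : Matrix (Fin k) (Fin k) ℂ) - suppP hq) * (csqrt hq * csqrt hq) *
      ((1 : Matrix (Fin k) (Fin k) ℂ) - suppP hq) = 0 := by
    rw [← Matrix.mul_assoc, hc, Matrix.zero_mul, Matrix.zero_mul]
  rwa [csqrt_sq hq] at h1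

lemma suppP_collapse {N : Matrix (Fin k) (Fin k) ℂ} (hN : N.PosSemidef) {t : ℂ}
    (hle : (t • q - N).PosSemidef) : suppP hq * N * suppP hq = N := by
  have hP : (suppP hq).IsHermitian := (suppP_psd hq).1
  have h1p : ((1 : Matrix (Fin k) (Fin k) ℂ) - suppP hq).PosSemidef := one_sub_suppP_psd hq
  have hq0 : ((1 : Matrix (Fin k) (Fin k) ℂ) - suppP hq) * q *
      ((1 : Matrix (Fin k) (Fin k) ℂ) - suppP hq) = 0 := one_sub_q_one_sub hq
  have gen : ∀ R : Matrix (Fin k) (Fin k) ℂ, R * (t • q - N) * R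
      = t • (R * q * R) - R * N * R := fun R => by
    rw [Matrix.mul_sub, Matrix.sub_mul, Matrix.mul_smul, Matrix.smul_mul]
  set R := (1 : Matrix (Fin k) (Fin k) ℂ) - suppP hq with hRdef
  have hA : (R * N * R).PosSemidef := by
    have h' := hN.mul_mul_conjTranspose_same R
    rwa [h1p.1] at h'
  have hmid : R * (t • q - N) * R = -(R * N * R) := by
    rw [gen R, hq0, smul_zero, zero_sub]
  have hB : (-(R * N * R)).PosSemidef := by
    rw [← hmid]
    have h' := hle.mul_mul_conjTranspose_same R
    rwa [h1p.1] at h'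
  exact collapse hN hP (psd_neg_eq_zero hA hB)

lemma suppP_collapse_all {n : ℕ} (Ψ : Matrix (Fin n) (Fin n) ℂ →ₗ[ℂ] Matrix (Fin k) (Fin k) ℂ)
    (hq2 : Ψ 1 = q) (hΨ : ∀ M, M.PosSemidef → (Ψ M).PosSemidef) (x : Matrix (Fin n) (Fin n) ℂ) :
    suppP hq * Ψ x * suppP hq = Ψ x := by
  have main := ext_of_psd
    (LinearMap.mulLeft ℂ (suppP hq) ∘ₗ LinearMap.mulRight ℂ (suppP hq) ∘ₗ Ψ) Ψ ?_
  · have := congrFun (congrArg (fun (L : _ →ₗ[ℂ] _) => ⇑L) main) x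
    simpa [Matrix.mul_assoc] using this
  · intro M hM
    simp only [LinearMap.comp_apply, LinearMap.mulLeft_apply, LinearMap.mulRight_apply]
    rw [← Matrix.mul_assoc]
    refine suppP_collapse hq (hΨ M hM) (t := M.trace) ?_
    have : M.trace • q - Ψ M = Ψ (M.trace • 1 - M) := by
      rw [map_sub, _root_.map_smul, hq2]
    rw [this]
    exact hΨ _ (psd_le_trace hM)

end Supp

section Phi
open Matrix

noncomputable def phiMap {n k : ℕ} (Ψ : MatC n →ₗ[ℂ] MatC k) (cinv p : MatC k) :
    MatC n →ₗ[ℂ] MatC k where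
  toFun x := cinv * Ψ x * cinv + ((n:ℂ)⁻¹ * x.trace) • (1 - p)
  map_add' x y := by
    show cinv * Ψ (x + y) * cinv + ((n:ℂ)⁻¹ * (x + y).trace) • (1 - p)
      = cinv * Ψ x * cinv + ((n:ℂ)⁻¹ * x.trace) • (1 - p)
        + (cinv * Ψ y * cinv + ((n:ℂ)⁻¹ * y.trace) • (1 - p))
    rw [map_add, Matrix.trace_add, Matrix.mul_add, Matrix.add_mul, mul_add, add_smul]
    abel
  map_smul' cc x := by
    show cinv * Ψ (cc • x) * cinv + ((n:ℂ)⁻¹ * (cc • x).trace) • (1 - p)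
      = cc • (cinv * Ψ x * cinv + ((n:ℂ)⁻¹ * x.trace) • (1 - p))
    rw [_root_.map_smul, Matrix.trace_smul, Matrix.mul_smul, Matrix.smul_mul, smul_add,
      smul_smul]
    congr 1
    simp only [smul_eq_mul]
    ring

lemma phiMap_apply {n k : ℕ} (Ψ : MatC n →ₗ[ℂ] MatC k) (cinv p : MatC k) (x : MatC n) :
    phiMap Ψ cinv p x = cinv * Ψ x * cinv + ((n:ℂ)⁻¹ * x.trace) • (1 - p) := rfl

end Phi

end Aux

/-- For `n, m ≥ 2`, the maximal Namioka–Phelps tensor product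
`S(M_n(ℂ)) ⊗^* S(M_m(ℂ))` equals
`{ρ₀^(m) ∘ (Φ ⊗ id_m) : Φ : M_n(ℂ) → M_m(ℂ) positive, tr(Φ(I_n)) = 1}` and equals
`{ρ ∘ (Φ ⊗ id_m) : Φ : M_n(ℂ) → M_m(ℂ) unital positive, ρ a state on M_m(ℂ) ⊗ M_m(ℂ)}`,
where `tr` is the normalized trace. -/
theorem maxTensorStates_matrix (n m : ℕ) (hn : 2 ≤ n) (hm : 2 ≤ m) :
    CStarNP.maxTensorStates (Matrix (Fin n) (Fin n) ℂ) (Matrix (Fin m) (Fin m) ℂ) =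
      {ρ | ∃ Φ : Matrix (Fin n) (Fin n) ℂ →ₗ[ℂ] Matrix (Fin m) (Fin m) ℂ,
        (∀ M, M.PosSemidef → (Φ M).PosSemidef) ∧ (m : ℂ)⁻¹ * Matrix.trace (Φ 1) = 1 ∧
        ρ = CStarNP.maxEntangledState m ∘ₗ TensorProduct.map Φ LinearMap.id} ∧
    CStarNP.maxTensorStates (Matrix (Fin n) (Fin n) ℂ) (Matrix (Fin m) (Fin m) ℂ) =
      {ρ | ∃ Φ : Matrix (Fin n) (Fin n) ℂ →ₗ[ℂ] Matrix (Fin m) (Fin m) ℂ,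
        (∀ M, M.PosSemidef → (Φ M).PosSemidef) ∧ Φ 1 = 1 ∧
        ∃ ω ∈ CStarNP.algStates (Matrix (Fin m) (Fin m) ℂ) (Matrix (Fin m) (Fin m) ℂ),
          ρ = ω ∘ₗ TensorProduct.map Φ LinearMap.id} := by
  have hm0 : (m:ℂ) ≠ 0 := Nat.cast_ne_zero.mpr (by omega)
  have hn0 : (n:ℂ) ≠ 0 := Nat.cast_ne_zero.mpr (by omega)
  have hone : ((1 : Matrix (Fin n) (Fin n) ℂ) ⊗ₜ[ℂ] (1 : Matrix (Fin m) (Fin m) ℂ))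
      = (1 : Matrix (Fin n) (Fin n) ℂ ⊗[ℂ] Matrix (Fin m) (Fin m) ℂ) :=
    (Algebra.TensorProduct.one_def).symm
  constructor
  · -- first equality
    ext ρ
    simp only [Set.mem_setOf_eq]
    constructor
    · rintro ⟨h1, h2⟩
      have hpos := Aux.maxTensor_pos ⟨h1, h2⟩
      refine ⟨Aux.toMap m ρ, fun M hM => Aux.toMap_posSemidef ρ hpos hM, ?_, ?_⟩
      · rw [Aux.trace_toMap, hone, h1, mul_one, inv_mul_cancel₀ hm0]
      · exact (Aux.comp_toMap hm0 ρ).symm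
    · rintro ⟨Φ, hΦ, hΦtr, rfl⟩
      constructor
      · rw [← hone, LinearMap.comp_apply, TensorProduct.map_tmul, LinearMap.id_coe, id_eq,
          Aux.maxEnt_tmul, Aux.pairing_one, hΦtr]
      · intro a b
        rw [LinearMap.comp_apply, TensorProduct.map_tmul, LinearMap.id_coe, id_eq,
          Aux.maxEnt_tmul]
        refine mul_nonneg (Aux.inv_nat_nonneg m) (Aux.pairing_nonneg ?_ ?_)
        · refine hΦ _ ?_
          rw [Matrix.star_eq_conjTranspose]
          exact Matrix.posSemidef_conjTranspose_mul_self a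
        · rw [Matrix.star_eq_conjTranspose]
          exact Matrix.posSemidef_conjTranspose_mul_self b
  · -- second equality
    ext ρ
    simp only [Set.mem_setOf_eq]
    constructor
    · rintro ⟨h1, h2⟩
      have hpos := Aux.maxTensor_pos ⟨h1, h2⟩
      set Ψ := Aux.toMap m ρ with hΨdef
      have hΨpos : ∀ M : Matrix (Fin n) (Fin n) ℂ, M.PosSemidef → (Ψ M).PosSemidef :=
        fun M hM => Aux.toMap_posSemidef ρ hpos hM
      have hq : (Ψ 1).PosSemidef := hΨpos 1 Matrix.PosSemidef.one
      have hcomp := Aux.comp_toMap hm0 ρ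
      have hstarc : star (Aux.csqrt hq) = Aux.csqrt hq := by
        rw [Matrix.star_eq_conjTranspose]
        exact (Aux.csqrt_psd hq).1
      set c := Aux.csqrt hq with hcdef
      set ct : Matrix (Fin m) (Fin m) ℂ ⊗[ℂ] Matrix (Fin m) (Fin m) ℂ
        := c ⊗ₜ[ℂ] (1 : Matrix (Fin m) (Fin m) ℂ) with hctdef
      set ω : (Matrix (Fin m) (Fin m) ℂ ⊗[ℂ] Matrix (Fin m) (Fin m) ℂ) →ₗ[ℂ] ℂ :=
        CStarNP.maxEntangledState m ∘ₗ (LinearMap.mulLeft ℂ ct ∘ₗ LinearMap.mulRight ℂ ct)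
        with hωdef
      have hωapp : ∀ z, ω z = CStarNP.maxEntangledState m (ct * (z * ct)) := fun z => rfl
      have hω1 : ω (1 : Matrix (Fin m) (Fin m) ℂ ⊗[ℂ] Matrix (Fin m) (Fin m) ℂ) = 1 := by
        rw [hωapp, one_mul, hctdef, Algebra.TensorProduct.tmul_mul_tmul, mul_one, hcdef,
          Aux.csqrt_sq hq, Aux.maxEnt_tmul, Aux.pairing_one, hΨdef, Aux.trace_toMap, hone, h1,
          mul_one, inv_mul_cancel₀ hm0]
      have hωstates : ω ∈ CStarNP.algStates (Matrix (Fin m) (Fin m) ℂ)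
          (Matrix (Fin m) (Fin m) ℂ) := by
        refine ⟨hω1, ?_⟩
        rintro z ⟨N, a, b, rfl⟩
        have hrw : ω (∑ i, ∑ j, (star (a i) * a j) ⊗ₜ[ℂ] (star (b i) * b j))
            = CStarNP.maxEntangledState m
              (∑ i, ∑ j, (star (a i * c) * (a j * c)) ⊗ₜ[ℂ] (star (b i) * b j)) := by
          rw [map_sum, map_sum]
          refine Finset.sum_congr rfl fun i _ => ?_
          rw [map_sum, map_sum]
          refine Finset.sum_congr rfl fun j _ => ?_
          rw [hωapp, hctdef, Algebra.TensorProduct.tmul_mul_tmul,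
            Algebra.TensorProduct.tmul_mul_tmul]
          congr 2
          · rw [star_mul, hstarc]
            simp only [Matrix.mul_assoc]
          · rw [one_mul, mul_one]
        rw [hrw]
        exact Aux.maxEnt_algPos (fun i => a i * c) b
      refine ⟨Aux.phiMap Ψ (Aux.cpinv hq) (Aux.suppP hq), ?_, ?_, ω, hωstates, ?_⟩
      · intro M hM
        rw [Aux.phiMap_apply]
        refine Matrix.PosSemidef.add ?_ (Aux.psd_smul ?_ (Aux.one_sub_suppP_psd hq))
        · have h' := (hΨpos M hM).conjTranspose_mul_mul_same (Aux.cpinv hq)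
          rwa [(Aux.cpinv_psd hq).1] at h'
        · exact mul_nonneg (Aux.inv_nat_nonneg n) (Aux.trace_psd_nonneg hM)
      · rw [Aux.phiMap_apply, Aux.cpinv_q_cpinv hq, Matrix.trace_one]
        simp only [Fintype.card_fin]
        rw [inv_mul_cancel₀ hn0, one_smul, add_comm, sub_add_cancel]
      · symm
        apply TensorProduct.ext'
        intro x y
        rw [LinearMap.comp_apply, TensorProduct.map_tmul, LinearMap.id_coe, id_eq, hωapp,
          hctdef, Algebra.TensorProduct.tmul_mul_tmul, Algebra.TensorProduct.tmul_mul_tmul,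
          one_mul, mul_one]
        have hkey : c * ((Aux.phiMap Ψ (Aux.cpinv hq) (Aux.suppP hq) x) * c) = Ψ x := by
          rw [Aux.phiMap_apply, Matrix.add_mul, Matrix.mul_add]
          have t1 : c * (Aux.cpinv hq * Ψ x * Aux.cpinv hq * c) = Ψ x := by
            rw [hcdef]
            simp only [← Matrix.mul_assoc]
            rw [Aux.csqrt_cpinv hq, Matrix.mul_assoc, Aux.cpinv_csqrt hq]
            exact Aux.suppP_collapse_all hq Ψ rfl hΨpos x
          have t2 : c * ((((n:ℂ)⁻¹ * x.trace) • ((1 : Matrix (Fin m) (Fin m) ℂ)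
              - Aux.suppP hq)) * c) = 0 := by
            rw [Matrix.smul_mul, Matrix.mul_smul, ← Matrix.mul_assoc, hcdef,
              Aux.csqrt_one_sub hq, Matrix.zero_mul, smul_zero]
          rw [t1, t2, add_zero]
        rw [hkey]
        have happ := congrArg (fun (L : (Matrix (Fin n) (Fin n) ℂ ⊗[ℂ]
          Matrix (Fin m) (Fin m) ℂ) →ₗ[ℂ] ℂ) => L (x ⊗ₜ[ℂ] y)) hcomp
        simpa [TensorProduct.map_tmul, hΨdef] using happ
    · rintro ⟨Φ, hΦpos, hΦ1, ω, ⟨hω1, hωpos⟩, rfl⟩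
      constructor
      · have hone2 : ((1 : Matrix (Fin m) (Fin m) ℂ) ⊗ₜ[ℂ] (1 : Matrix (Fin m) (Fin m) ℂ))
            = (1 : Matrix (Fin m) (Fin m) ℂ ⊗[ℂ] Matrix (Fin m) (Fin m) ℂ) :=
          (Algebra.TensorProduct.one_def).symm
        rw [← hone, LinearMap.comp_apply, TensorProduct.map_tmul, LinearMap.id_coe, id_eq, hΦ1,
          hone2, hω1]
      · intro a b
        rw [LinearMap.comp_apply, TensorProduct.map_tmul, LinearMap.id_coe, id_eq]
        have hpsd : (Φ (star a * a)).PosSemidef := by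
          refine hΦpos _ ?_
          rw [Matrix.star_eq_conjTranspose]
          exact Matrix.posSemidef_conjTranspose_mul_self a
        obtain ⟨C, hC⟩ := Aux.psd_exists_ct hpsd
        rw [Matrix.star_eq_conjTranspose a] at hC
        apply hωpos
        refine ⟨1, ![C], ![b], ?_⟩
        simp only [Fin.sum_univ_one, Matrix.cons_val_zero, TensorProduct.map_tmul,
          LinearMap.id_coe, id_eq, Matrix.star_eq_conjTranspose]
        rw [hC]
end

section
/- Let (A, P, u) and (A', P', u) be ordered real vector spaces with the same order unit u, where A ⊆ A' and P = P' ∩ A. Then every state on (A, P, u) extends to a state on (A', P', u). -/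
/-- Let `(A, P, u)` and `(A', P', u)` be ordered real vector spaces with the
same order unit `u`, where `A ⊆ A'` is a subspace and `P = P' ∩ A`. Then every state on
`(A, P, u)` extends to a state on `(A', P', u)`. -/
theorem state_extension
    {A' : Type*} [AddCommGroup A'] [Module ℝ A'] (P' : Set A') (Asub : Submodule ℝ A')
    (u : A')
    -- `P'` is a proper cone in `A'`:
    (hP'add : ∀ x ∈ P', ∀ y ∈ P', x + y ∈ P')
    (hP'smul : ∀ c : ℝ, 0 ≤ c → ∀ x ∈ P', c • x ∈ P')
    (hP'proper : ∀ x, x ∈ P' → -x ∈ P' → x = 0)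
    (hP'gen : ∀ x : A', ∃ y ∈ P', ∃ z ∈ P', x = y - z)
    -- `P = P' ∩ A` is a proper generating cone in `A`:
    (hPgen : ∀ x ∈ Asub, ∃ y ∈ P' ∩ Asub, ∃ z ∈ P' ∩ Asub, x = y - z)
    -- `u` is an order unit belonging to both `P` and `P'`:
    (hu : u ∈ P') (huA : u ∈ Asub)
    (hOU' : ∀ x : A', ∃ n : ℕ, (n : ℝ) • u - x ∈ P' ∧ x + (n : ℝ) • u ∈ P')
    -- `φ` is a state on `(A, P, u)`:
    (φ : Asub →ₗ[ℝ] ℝ)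
    (hφpos : ∀ x : Asub, (x : A') ∈ P' → 0 ≤ φ x)
    (hφu : φ ⟨u, huA⟩ = 1) :
    ∃ ψ : A' →ₗ[ℝ] ℝ, (∀ x ∈ P', 0 ≤ ψ x) ∧ ψ u = 1 ∧ ∀ x : Asub, ψ x = φ x := by
  set s : PointedCone ℝ A' :=
    { carrier := P'
      zero_mem' := by simpa using hP'smul 0 le_rfl u hu
      smul_mem' := fun c x hx => hP'smul c c.2 x hx
      add_mem' := fun {x y} hx hy => hP'add x hx y hy }
  set f : A' →ₗ.[ℝ] ℝ := ⟨Asub, φ⟩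
  have nonneg : ∀ x : f.domain, (x : A') ∈ s → 0 ≤ f x := fun x hx => hφpos x hx
  have dense : ∀ y, ∃ x : f.domain, (x : A') + y ∈ s := by
    intro y
    obtain ⟨n, -, hn⟩ := hOU' y
    exact ⟨⟨(n : ℝ) • u, Asub.smul_mem _ huA⟩, by simpa [add_comm] using (show y + (n : ℝ) • u ∈ s from hn)⟩
  obtain ⟨g, hg, hgs⟩ := riesz_extension s f nonneg dense
  refine ⟨g, hgs, ?_, fun x => hg x⟩
  have := hg ⟨u, huA⟩
  simpa [f, LinearPMap.mk_apply, hφu] using this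
end

section
/- Let K₁ and K₂ be compact convex sets and let F₁ ⊆ K₁ and F₂ ⊆ K₂ be affinely independent subsets. Then the set F₁ ⊗ F₂ = {x₁ ⊗ x₂ : x₁ ∈ F₁, x₂ ∈ F₂} is affinely independent in K₁ ⊗_* K₂. -/
open scoped TensorProduct

namespace ConvexNP

variable {E : Type*} [AddCommGroup E] [Module ℝ E] [TopologicalSpace E]

/-- The space `A(K)` of continuous affine real-valued functions on a subset `K` of a
topological vector space, as a submodule of `C(K, ℝ)`. -/
def affFns (K : Set E) : Submodule ℝ C(K, ℝ) where
  carrier := {f | ∀ (x y : K) (t : ℝ), 0 ≤ t → t ≤ 1 → ∀ z : K,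
    (z : E) = t • (x : E) + (1 - t) • (y : E) → f z = t * f x + (1 - t) * f y}
  add_mem' := by
    intro _ _ hf hg x y t ht ht1 z hz
    simp only [ContinuousMap.add_apply]
    rw [hf x y t ht ht1 z hz, hg x y t ht ht1 z hz]; ring
  zero_mem' := by
    intro x y t ht ht1 z hz
    simp
  smul_mem' := by
    intro _ _ hf x y t ht ht1 z hz
    simp only [ContinuousMap.smul_apply, smul_eq_mul]
    rw [hf x y t ht ht1 z hz]; ring

/-- Evaluation of affine functions at a point of `K`, as a linear functional on `A(K)`. -/
def evalAt (K : Set E) (x : K) : affFns K →ₗ[ℝ] ℝ where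
  toFun f := (f : C(K, ℝ)) x
  map_add' _ _ := rfl
  map_smul' _ _ := rfl

/-- The constant function `1`, the order unit of `A(K)`. -/
def oneFn (K : Set E) : affFns K :=
  ⟨(1 : C(K, ℝ)), by intro x y t ht ht1 z hz; simp only [ContinuousMap.one_apply]; ring⟩

variable {E₁ E₂ : Type*} [AddCommGroup E₁] [Module ℝ E₁] [TopologicalSpace E₁]
  [AddCommGroup E₂] [Module ℝ E₂] [TopologicalSpace E₂]

/-- The linear functional `x₁ ⊗ x₂` on `A(K₁) ⊗ A(K₂)` induced by a pair of points
`x₁ ∈ K₁, x₂ ∈ K₂`; it sends `f₁ ⊗ f₂` to `f₁(x₁) f₂(x₂)`. -/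
noncomputable def elemTensor (K₁ : Set E₁) (K₂ : Set E₂) (x₁ : K₁) (x₂ : K₂) :
    (affFns K₁ ⊗[ℝ] affFns K₂) →ₗ[ℝ] ℝ :=
  (TensorProduct.lid ℝ ℝ).toLinearMap ∘ₗ TensorProduct.map (evalAt K₁ x₁) (evalAt K₂ x₂)

/-- The "inner" cone in `A(K₁) ⊗ A(K₂)` generated by the elements `f₁ ⊗ f₂` with `fᵢ ≥ 0`. -/
def innerCone (K₁ : Set E₁) (K₂ : Set E₂) : Set (affFns K₁ ⊗[ℝ] affFns K₂) :=
  (AddSubmonoid.closure {h | ∃ f : affFns K₁, ∃ g : affFns K₂,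
    (∀ x : K₁, 0 ≤ (f : C(K₁, ℝ)) x) ∧ (∀ y : K₂, 0 ≤ (g : C(K₂, ℝ)) y) ∧
    h = f ⊗ₜ[ℝ] g} : Set (affFns K₁ ⊗[ℝ] affFns K₂))

/-- The "outer" cone in `A(K₁) ⊗ A(K₂)`: elements that are nonnegative when paired with any
`x₁ ⊗ x₂`, `xᵢ ∈ Kᵢ`. -/
def outerCone (K₁ : Set E₁) (K₂ : Set E₂) : Set (affFns K₁ ⊗[ℝ] affFns K₂) :=
  {h | ∀ (x₁ : K₁) (x₂ : K₂), 0 ≤ elemTensor K₁ K₂ x₁ x₂ h}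

/-- The minimal Namioka–Phelps tensor product `K₁ ⊗_* K₂`, realized as a set of linear
functionals on `A(K₁) ⊗ A(K₂)` (with the weak* topology, i.e. the topology induced from the
product topology on functions). -/
noncomputable def minTensor (K₁ : Set E₁) (K₂ : Set E₂) :
    Set ((affFns K₁ ⊗[ℝ] affFns K₂) → ℝ) :=
  {ω | IsLinearMap ℝ ω ∧ ω (oneFn K₁ ⊗ₜ[ℝ] oneFn K₂) = 1 ∧
    ∀ h ∈ outerCone K₁ K₂, 0 ≤ ω h}

/-- The maximal Namioka–Phelps tensor product `K₁ ⊗^* K₂`. -/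
noncomputable def maxTensor (K₁ : Set E₁) (K₂ : Set E₂) :
    Set ((affFns K₁ ⊗[ℝ] affFns K₂) → ℝ) :=
  {ω | IsLinearMap ℝ ω ∧ ω (oneFn K₁ ⊗ₜ[ℝ] oneFn K₂) = 1 ∧
    ∀ h ∈ innerCone K₁ K₂, 0 ≤ ω h}

/-- The Riesz interpolation property for the space `A(K)` of continuous affine functions on
`K`; by definition, `K` is a Choquet simplex iff this holds (for `K` compact convex). -/
def RieszInterpolation (K : Set E) : Prop :=
  ∀ a₁ a₂ b₁ b₂ : affFns K,
    (∀ x : K, (a₁ : C(K, ℝ)) x ≤ (b₁ : C(K, ℝ)) x) →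
    (∀ x : K, (a₁ : C(K, ℝ)) x ≤ (b₂ : C(K, ℝ)) x) →
    (∀ x : K, (a₂ : C(K, ℝ)) x ≤ (b₁ : C(K, ℝ)) x) →
    (∀ x : K, (a₂ : C(K, ℝ)) x ≤ (b₂ : C(K, ℝ)) x) →
    ∃ c : affFns K,
      (∀ x : K, (a₁ : C(K, ℝ)) x ≤ (c : C(K, ℝ)) x) ∧
      (∀ x : K, (a₂ : C(K, ℝ)) x ≤ (c : C(K, ℝ)) x) ∧
      (∀ x : K, (c : C(K, ℝ)) x ≤ (b₁ : C(K, ℝ)) x) ∧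
      (∀ x : K, (c : C(K, ℝ)) x ≤ (b₂ : C(K, ℝ)) x)

/-- A compact convex set is *the Poulsen simplex* iff it is non-trivial, metrizable, and its
extreme points are dense (this determines it uniquely among Choquet simplexes). -/
def IsPoulsen {V : Type*} [AddCommGroup V] [Module ℝ V] [TopologicalSpace V]
    (K : Set V) : Prop :=
  (∃ x ∈ K, ∃ y ∈ K, x ≠ y) ∧ TopologicalSpace.MetrizableSpace K ∧
    K ⊆ closure (Set.extremePoints ℝ K)

end ConvexNP



section AuxNP

lemma exists_clm_values_np {V : Type*} [AddCommGroup V] [Module ℝ V] [TopologicalSpace V]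
    [IsTopologicalAddGroup V] [ContinuousSMul ℝ V] [LocallyConvexSpace ℝ V] [T2Space V]
    {ι : Type*} [Fintype ι] {v : ι → V} (hv : LinearIndependent ℝ v) (c : ι → ℝ) :
    ∃ φ : V →L[ℝ] ℝ, ∀ i, φ (v i) = c i := by
  classical
  set f : (ι → ℝ) →ₗ[ℝ] V := Fintype.linearCombination ℝ v with hf
  have hinj : Function.Injective f := by
    rw [← LinearMap.ker_eq_bot, LinearMap.ker_eq_bot']
    intro g hg
    have := Fintype.linearIndependent_iff.1 hv g (by
      simpa [hf, Fintype.linearCombination_apply] using hg)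
    exact funext this
  have hsurj := (SeparatingDual.dualMap_surjective_iff (R := ℝ) (f := f)).2 hinj
  obtain ⟨φ, hφ⟩ := hsurj (Fintype.linearCombination ℝ c)
  refine ⟨φ, fun i => ?_⟩
  have := congrFun (congrArg (fun (ψ : (ι → ℝ) →ₗ[ℝ] ℝ) => (ψ : (ι → ℝ) → ℝ)) hφ) (Pi.single i 1)
  simpa [hf, LinearMap.dualMap_apply, Fintype.linearCombination_apply, Pi.single_apply,
    Finset.sum_ite_eq', mul_comm] using this

lemma exists_affFn_np {E : Type*} [AddCommGroup E] [Module ℝ E] [TopologicalSpace E]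
    [IsTopologicalAddGroup E] [ContinuousSMul ℝ E] [LocallyConvexSpace ℝ E] [T2Space E]
    (K : Set E) {F : Set E} (hind : AffineIndependent ℝ ((↑) : F → E))
    (T : Finset E) (hT : ↑T ⊆ F) {p : E} (hp : p ∈ T) :
    ∃ f : ConvexNP.affFns K, ∀ x : K, (x : E) ∈ T →
      (((x : E) = p → (f : C(K, ℝ)) x = 1) ∧ ((x : E) ≠ p → (f : C(K, ℝ)) x = 0)) := by
  classical
  set i₀ : F := ⟨p, hT hp⟩ with hi₀
  have hli := (affineIndependent_iff_linearIndependent_vsub ℝ ((↑) : F → E) i₀).1 hind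
  set S := T.erase p with hS
  have hvS : LinearIndependent ℝ (fun q : {x // x ∈ S} => (q : E) - p) := by
    have hmap : ∀ q : {x // x ∈ S}, (q : E) ∈ F ∧ (q : E) ≠ p := fun q =>
      ⟨hT (Finset.mem_of_mem_erase q.2), Finset.ne_of_mem_erase q.2⟩
    let j : {x // x ∈ S} → {x : F // x ≠ i₀} := fun q =>
      ⟨⟨(q : E), (hmap q).1⟩, fun h => (hmap q).2 (congrArg Subtype.val h)⟩
    have hjinj : Function.Injective j := by
      intro a b hab
      exact Subtype.ext (congrArg (fun x : {x : F // x ≠ i₀} => ((x : F) : E)) hab)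
    have := hli.comp j hjinj
    exact this
  obtain ⟨φ, hφ⟩ := exists_clm_values_np hvS (fun _ => (-1 : ℝ))
  refine ⟨⟨⟨fun x => φ x - φ p + 1, by fun_prop⟩, ?_⟩, ?_⟩
  · intro x y t ht ht1 z hz
    simp only [ContinuousMap.coe_mk]
    have : φ (z : E) = t * φ x + (1 - t) * φ y := by
      rw [hz]; simp [mul_comm]
    rw [this]; ring
  · intro x hx
    constructor
    · intro hxp
      simp [hxp]
    · intro hxp
      have hxS : (x : E) ∈ S := Finset.mem_erase.2 ⟨hxp, hx⟩
      have h2 : φ ((x : E) - p) = -1 := hφ ⟨(x : E), hxS⟩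
      rw [map_sub] at h2
      simp only [ContinuousMap.coe_mk]
      linarith

end AuxNP

/-- Let `K₁` and `K₂` be compact convex sets (in Hausdorff locally convex
topological vector spaces) and let `F₁ ⊆ K₁` and `F₂ ⊆ K₂` be affinely independent subsets.
Then `F₁ ⊗ F₂ = {x₁ ⊗ x₂ : x₁ ∈ F₁, x₂ ∈ F₂}` is affinely independent in `K₁ ⊗_* K₂`. -/
theorem elemTensor_affineIndependent
    {E₁ E₂ : Type*} [AddCommGroup E₁] [Module ℝ E₁] [TopologicalSpace E₁]
    [IsTopologicalAddGroup E₁] [ContinuousSMul ℝ E₁] [LocallyConvexSpace ℝ E₁] [T2Space E₁]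
    [AddCommGroup E₂] [Module ℝ E₂] [TopologicalSpace E₂]
    [IsTopologicalAddGroup E₂] [ContinuousSMul ℝ E₂] [LocallyConvexSpace ℝ E₂] [T2Space E₂]
    (K₁ : Set E₁) (K₂ : Set E₂)
    (hK₁c : IsCompact K₁) (hK₁conv : Convex ℝ K₁)
    (hK₂c : IsCompact K₂) (hK₂conv : Convex ℝ K₂)
    (F₁ : Set E₁) (F₂ : Set E₂) (hF₁ : F₁ ⊆ K₁) (hF₂ : F₂ ⊆ K₂)
    (hF₁ind : AffineIndependent ℝ ((↑) : F₁ → E₁))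
    (hF₂ind : AffineIndependent ℝ ((↑) : F₂ → E₂)) :
    AffineIndependent ℝ
      ((↑) : {ω : (ConvexNP.affFns K₁ ⊗[ℝ] ConvexNP.affFns K₂) →ₗ[ℝ] ℝ |
          ∃ (x₁ : K₁) (x₂ : K₂), (x₁ : E₁) ∈ F₁ ∧ (x₂ : E₂) ∈ F₂ ∧
            ω = ConvexNP.elemTensor K₁ K₂ x₁ x₂} →
        ((ConvexNP.affFns K₁ ⊗[ℝ] ConvexNP.affFns K₂) →ₗ[ℝ] ℝ)) := by
  classical
  rw [affineIndependent_iff]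
  intro s w hw0 hsum i₀ hi₀
  have hwit : ∀ i : {ω : (ConvexNP.affFns K₁ ⊗[ℝ] ConvexNP.affFns K₂) →ₗ[ℝ] ℝ |
      ∃ (x₁ : K₁) (x₂ : K₂), (x₁ : E₁) ∈ F₁ ∧ (x₂ : E₂) ∈ F₂ ∧
        ω = ConvexNP.elemTensor K₁ K₂ x₁ x₂},
      ∃ (x₁ : K₁) (x₂ : K₂), (x₁ : E₁) ∈ F₁ ∧ (x₂ : E₂) ∈ F₂ ∧
        (i : (ConvexNP.affFns K₁ ⊗[ℝ] ConvexNP.affFns K₂) →ₗ[ℝ] ℝ)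
          = ConvexNP.elemTensor K₁ K₂ x₁ x₂ := fun i => i.2
  choose X₁ X₂ hX₁ hX₂ hXeq using hwit
  haveI : DecidableEq {ω : (ConvexNP.affFns K₁ ⊗[ℝ] ConvexNP.affFns K₂) →ₗ[ℝ] ℝ |
      ∃ (x₁ : K₁) (x₂ : K₂), (x₁ : E₁) ∈ F₁ ∧ (x₂ : E₂) ∈ F₂ ∧
        ω = ConvexNP.elemTensor K₁ K₂ x₁ x₂} := Classical.decEq _
  set T₁ : Finset E₁ := s.image (fun i => (X₁ i : E₁)) with hT₁
  set T₂ : Finset E₂ := s.image (fun i => (X₂ i : E₂)) with hT₂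
  have hT₁F : ↑T₁ ⊆ F₁ := by
    intro x hx
    simp only [hT₁, Finset.coe_image, Set.mem_image] at hx
    obtain ⟨i, _, rfl⟩ := hx
    exact hX₁ i
  have hT₂F : ↑T₂ ⊆ F₂ := by
    intro x hx
    simp only [hT₂, Finset.coe_image, Set.mem_image] at hx
    obtain ⟨i, _, rfl⟩ := hx
    exact hX₂ i
  obtain ⟨f, hf⟩ := exists_affFn_np K₁ hF₁ind T₁ hT₁F
    (Finset.mem_image_of_mem (fun i => (X₁ i : E₁)) hi₀)
  obtain ⟨g, hg⟩ := exists_affFn_np K₂ hF₂ind T₂ hT₂F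
    (Finset.mem_image_of_mem (fun i => (X₂ i : E₂)) hi₀)
  have hval : ∀ i : {ω : (ConvexNP.affFns K₁ ⊗[ℝ] ConvexNP.affFns K₂) →ₗ[ℝ] ℝ |
      ∃ (x₁ : K₁) (x₂ : K₂), (x₁ : E₁) ∈ F₁ ∧ (x₂ : E₂) ∈ F₂ ∧
        ω = ConvexNP.elemTensor K₁ K₂ x₁ x₂},
      (i : (ConvexNP.affFns K₁ ⊗[ℝ] ConvexNP.affFns K₂) →ₗ[ℝ] ℝ) (f ⊗ₜ[ℝ] g)
      = (f : C(K₁, ℝ)) (X₁ i) * (g : C(K₂, ℝ)) (X₂ i) := by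
    intro i
    rw [hXeq i]
    simp [ConvexNP.elemTensor, ConvexNP.evalAt]
  have h0 : ∑ i ∈ s, w i * ((f : C(K₁, ℝ)) (X₁ i) * (g : C(K₂, ℝ)) (X₂ i)) = 0 := by
    have := congrArg
      (fun ψ : (ConvexNP.affFns K₁ ⊗[ℝ] ConvexNP.affFns K₂) →ₗ[ℝ] ℝ => ψ (f ⊗ₜ[ℝ] g))
      hsum
    simpa only [LinearMap.zero_apply, Finset.sum_apply, LinearMap.coe_sum,
      LinearMap.smul_apply, smul_eq_mul, hval] using this
  have key : ∀ i ∈ s, w i * ((f : C(K₁, ℝ)) (X₁ i) * (g : C(K₂, ℝ)) (X₂ i))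
      = if i = i₀ then w i₀ else 0 := by
    intro i hi
    have hmem1 : (X₁ i : E₁) ∈ T₁ := Finset.mem_image_of_mem _ hi
    have hmem2 : (X₂ i : E₂) ∈ T₂ := Finset.mem_image_of_mem _ hi
    by_cases h1 : (X₁ i : E₁) = (X₁ i₀ : E₁)
    · by_cases h2 : (X₂ i : E₂) = (X₂ i₀ : E₂)
      · have hi' : i = i₀ := by
          apply Subtype.ext
          rw [hXeq i, hXeq i₀, Subtype.ext h1, Subtype.ext h2]
        rw [if_pos hi', (hf _ hmem1).1 h1, (hg _ hmem2).1 h2, hi']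
        ring
      · have hne : i ≠ i₀ := fun h => h2 (by rw [h])
        rw [if_neg hne, (hg _ hmem2).2 h2]
        ring
    · have hne : i ≠ i₀ := fun h => h1 (by rw [h])
      rw [if_neg hne, (hf _ hmem1).2 h1]
      ring
  have h1 : ∑ i ∈ s, (if i = i₀ then w i₀ else 0) = 0 :=
    (Finset.sum_congr rfl key).symm.trans h0
  rwa [Finset.sum_ite_eq' s i₀ (fun _ => w i₀), if_pos hi₀] at h1
end

section
/- If A is a non-commutative C*-algebra, then the ordered real vector space A_sa of self-adjoint elements of A, with the usual C*-algebra order, does not satisfy the Riesz interpolation property: there exist self-adjoint elements a₁, a₂, b₁, b₂ in A with aᵢ ≤ b_j for i, j ∈ {1,2}, for which no self-adjoint c ∈ A satisfies aᵢ ≤ c ≤ b_j for all i, j ∈ {1,2}. -/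
/-- The usual order on a C*-algebra: `x ≤ y` iff `y - x` is positive, i.e. `y - x = c* c`
for some `c`. -/
def CStarLe {A : Type*} [NonUnitalCStarAlgebra A] (x y : A) : Prop :=
  ∃ c : A, y - x = star c * c

open scoped CStarAlgebra

namespace NotRiesz

section Tents

noncomputable def rmp (M h : ℝ) (k : ℕ) (τ : ℝ) : ℝ :=
  min 1 (max 0 ((-M + ((k : ℝ) - 1) * h - τ) / h + 1))

noncomputable def tent (M h : ℝ) (k : ℕ) (τ : ℝ) : ℝ :=
  rmp M h (k + 1) τ - rmp M h k τ

variable {M h : ℝ} (hh : 0 < h)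

lemma rmp_cont (k : ℕ) : Continuous (rmp M h k) := by
  unfold rmp; fun_prop

lemma tent_cont (k : ℕ) : Continuous (tent M h k) := (rmp_cont _).sub (rmp_cont _)

lemma rmp_nonneg (k : ℕ) (τ : ℝ) : 0 ≤ rmp M h k τ :=
  le_min zero_le_one (le_max_left _ _)

lemma rmp_le_one (k : ℕ) (τ : ℝ) : rmp M h k τ ≤ 1 := min_le_left _ _

include hh in
lemma rmp_mono (k : ℕ) (τ : ℝ) : rmp M h k τ ≤ rmp M h (k + 1) τ := by
  unfold rmp
  refine min_le_min le_rfl (max_le_max le_rfl ?_)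
  have key : (-M + ((k : ℝ) - 1) * h - τ) ≤ (-M + (((k + 1 : ℕ) : ℝ) - 1) * h - τ) := by
    push_cast; nlinarith [hh.le]
  have := (div_le_div_iff_of_pos_right hh).mpr key
  linarith

include hh in
lemma rmp_one {k : ℕ} {τ : ℝ} (hτ : τ ≤ -M + ((k : ℝ) - 1) * h) : rmp M h k τ = 1 := by
  unfold rmp
  have h0 : 0 ≤ (-M + ((k : ℝ) - 1) * h - τ) / h := div_nonneg (by linarith) hh.le
  have h1 : (1 : ℝ) ≤ max 0 ((-M + ((k : ℝ) - 1) * h - τ) / h + 1) :=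
    le_max_of_le_right (by linarith)
  exact min_eq_left h1

include hh in
lemma rmp_zero {k : ℕ} {τ : ℝ} (hτ : -M + (k : ℝ) * h ≤ τ) : rmp M h k τ = 0 := by
  unfold rmp
  have h0 : (-M + ((k : ℝ) - 1) * h - τ) / h + 1 ≤ 0 := by
    have : (-M + ((k : ℝ) - 1) * h - τ) / h ≤ (-h) / h := by
      exact (div_le_div_iff_of_pos_right hh).mpr (by linarith)
    rw [neg_div, div_self hh.ne'] at this
    linarith
  rw [max_eq_left h0, min_eq_right zero_le_one]

include hh in
lemma tent_nonneg (k : ℕ) (τ : ℝ) : 0 ≤ tent M h k τ :=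
  sub_nonneg.2 (rmp_mono hh k τ)

lemma tent_le_one (k : ℕ) (τ : ℝ) : tent M h k τ ≤ 1 := by
  have := rmp_le_one (M := M) (h := h) (k + 1) τ
  have := rmp_nonneg (M := M) (h := h) k τ
  unfold tent; linarith

include hh in
lemma tent_zero_left {k : ℕ} {τ : ℝ} (hτ : τ ≤ -M + ((k : ℝ) - 1) * h) : tent M h k τ = 0 := by
  unfold tent
  rw [rmp_one hh hτ, rmp_one hh (hτ.trans ?_), sub_self]
  push_cast; nlinarith [hh.le]

include hh in
lemma tent_zero_right {k : ℕ} {τ : ℝ} (hτ : -M + ((k : ℝ) + 1) * h ≤ τ) : tent M h k τ = 0 := by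
  unfold tent
  rw [rmp_zero hh (le_trans (by push_cast; ring_nf; nlinarith [hh.le]) hτ),
    rmp_zero hh (le_trans (by push_cast; nlinarith [hh.le]) hτ), sub_self]

include hh in
lemma tent_disj {k l : ℕ} (hkl : k + 2 ≤ l) (τ : ℝ) : tent M h k τ * tent M h l τ = 0 := by
  rcases le_total τ (-M + ((l : ℝ) - 1) * h) with hc | hc
  · rw [tent_zero_left hh hc, mul_zero]
  · have : -M + ((k : ℝ) + 1) * h ≤ τ := by
      refine le_trans ?_ hc
      have : ((k : ℝ) + 1) ≤ ((l : ℝ) - 1) := by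
        have : (k : ℝ) + 2 ≤ (l : ℝ) := by exact_mod_cast hkl
        linarith
      nlinarith [hh.le]
    rw [tent_zero_right hh this, zero_mul]

include hh in
lemma tent_center {k : ℕ} (τ : ℝ) :
    |τ - (-M + (k : ℝ) * h)| * tent M h k τ ≤ h * tent M h k τ := by
  rcases le_or_gt (|τ - (-M + (k : ℝ) * h)|) h with hc | hc
  · exact mul_le_mul_of_nonneg_right hc (tent_nonneg hh k τ)
  · have h0 : tent M h k τ = 0 := by
      rcases le_or_gt τ (-M + (k : ℝ) * h) with hd | hd
      · refine tent_zero_left hh ?_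
        rw [abs_of_nonpos (by linarith)] at hc
        nlinarith [hh.le]
      · refine tent_zero_right hh ?_
        rw [abs_of_pos (by linarith)] at hc
        nlinarith [hh.le]
    rw [h0, mul_zero, mul_zero]

lemma tent_sum (K : ℕ) (τ : ℝ) :
    ∑ k ∈ Finset.range K, tent M h k τ = rmp M h K τ - rmp M h 0 τ :=
  Finset.sum_range_sub (fun k => rmp M h k τ) K


end Tents

section Algebra

variable {A : Type*} [NonUnitalCStarAlgebra A]

lemma exists_star_mul_self (d : A) (hd : 0 ≤ (d : A⁺¹)) : ∃ C : A, d = star C * C := by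
  have hd' : IsSelfAdjoint d := by
    have : IsSelfAdjoint (d : A⁺¹) := .of_nonneg hd
    exact (Unitization.isSelfAdjoint_inr (R := ℂ)).mp this
  have hq : ∀ τ ∈ quasispectrum ℝ d, 0 ≤ τ := by
    rw [Unitization.quasispectrum_eq_spectrum_inr' ℝ ℂ d]
    exact fun τ hτ => spectrum_nonneg_of_nonneg hd hτ
  refine ⟨cfcₙ (fun ρ : ℝ => Real.sqrt ρ) d, ?_⟩
  have h1 : IsSelfAdjoint (cfcₙ (fun ρ : ℝ => Real.sqrt ρ) d) := cfcₙ_predicate _ d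
  rw [h1.star_eq, ← cfcₙ_mul _ _ d]
  conv_lhs => rw [← cfcₙ_id ℝ d hd']
  exact cfcₙ_congr fun τ hτ => (Real.mul_self_sqrt (hq τ hτ)).symm

lemma cstarLe_of_inr_le {x y : A} (h : (x : A⁺¹) ≤ (y : A⁺¹)) : CStarLe x y := by
  have h0 : 0 ≤ ((y - x : A) : A⁺¹) := by
    rw [Unitization.inr_sub ℂ]
    exact sub_nonneg.2 h
  exact exists_star_mul_self _ h0

lemma inr_le_of_cstarLe {x y : A} (h : CStarLe x y) : (x : A⁺¹) ≤ (y : A⁺¹) := by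
  obtain ⟨c, hc⟩ := h
  rw [← sub_nonneg, ← Unitization.inr_sub ℂ, hc, Unitization.inr_mul ℂ,
    Unitization.inr_star]
  exact star_mul_self_nonneg _

lemma smul_nonneg_real {p : A⁺¹} (hp : 0 ≤ p) {r : ℝ} (hr : 0 ≤ r) : 0 ≤ r • p := by
  have key : r • p = star (Real.sqrt r • (1 : A⁺¹)) * p * (Real.sqrt r • (1 : A⁺¹)) := by
    simp only [star_smul, star_one, smul_mul_assoc, mul_smul_comm, one_mul, mul_one, smul_smul,
      star_trivial, Real.mul_self_sqrt hr]
  rw [key]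
  exact star_left_conjugate_nonneg hp _

lemma smul_le_smul_real {p q : A⁺¹} (h : p ≤ q) {r : ℝ} (hr : 0 ≤ r) : r • p ≤ r • q := by
  rw [← sub_nonneg, ← smul_sub]
  exact smul_nonneg_real (sub_nonneg.2 h) hr

lemma norm_mul_self (c : A⁺¹) (hc : IsSelfAdjoint c) : ‖c * c‖ = ‖c‖ ^ 2 := by
  rw [show c * c = star c * c from by rw [hc.star_eq], CStarRing.norm_star_mul_self]; ring

lemma norm_cube (c : A⁺¹) (hc : IsSelfAdjoint c) : ‖c * c * c‖ = ‖c‖ ^ 3 := by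
  have h2 : ‖c * c‖ = ‖c‖ ^ 2 := norm_mul_self c hc
  have h4 : ‖c * c * (c * c)‖ = ‖c‖ ^ 4 := by
    have hcc : IsSelfAdjoint (c * c) := by
      rw [IsSelfAdjoint, star_mul, hc.star_eq]
    rw [norm_mul_self (c * c) hcc, h2]; ring
  have hle : ‖c * c * c‖ ≤ ‖c‖ ^ 3 := by
    calc ‖c * c * c‖ ≤ ‖c * c‖ * ‖c‖ := norm_mul_le _ _
    _ = ‖c‖ ^ 3 := by rw [h2]; ring
  have hge : ‖c‖ ^ 4 ≤ ‖c * c * c‖ * ‖c‖ := by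
    calc ‖c‖ ^ 4 = ‖c * c * (c * c)‖ := h4.symm
    _ = ‖c * c * c * c‖ := by rw [mul_assoc (c*c) c c, ← mul_assoc]
    _ ≤ ‖c * c * c‖ * ‖c‖ := norm_mul_le _ _
  rcases eq_or_lt_of_le (norm_nonneg c) with h0 | h0
  · rw [← h0]; simp [← h0, norm_le_zero_iff.mp h0.symm.le]
  · nlinarith [norm_nonneg (c * c * c)]

lemma sq_le_norm_smul {c : A⁺¹} (hc : 0 ≤ c) : c * c ≤ ‖c‖ • c := by
  have hsa : IsSelfAdjoint c := .of_nonneg hc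
  have h1 : cfc (fun τ : ℝ => τ * τ) c ≤ cfc (fun τ : ℝ => ‖c‖ * τ) c := by
    refine cfc_mono (fun τ hτ => ?_) (by fun_prop) (by fun_prop)
    have h0 : 0 ≤ τ := spectrum_nonneg_of_nonneg hc hτ
    have hle : τ ≤ ‖c‖ := (Real.le_norm_self τ).trans (spectrum.norm_le_norm_of_mem hτ)
    exact mul_le_mul_of_nonneg_right hle h0
  have e1 : cfc (fun τ : ℝ => τ * τ) c = c * c := by
    rw [cfc_mul _ _ c, cfc_id' ℝ c]
  have e2 : cfc (fun τ : ℝ => ‖c‖ * τ) c = ‖c‖ • c := by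
    have : (fun τ : ℝ => ‖c‖ * τ) = fun τ : ℝ => ‖c‖ • (id τ) := by funext; simp
    rw [this, cfc_smul _ _ c, cfc_id ℝ c]
  rwa [e1, e2] at h1

/-- If `0 ≤ c ≤ S * S` and `c ≤ star T * T`, then `‖c‖ ≤ ‖T * S‖`. -/
lemma interpolant_norm_le {c S T : A⁺¹} (hc : 0 ≤ c) (hS : IsSelfAdjoint S)
    (h1 : c ≤ S * S) (h2 : c ≤ star T * T) : ‖c‖ ≤ ‖T * S‖ := by
  have hsa : IsSelfAdjoint c := .of_nonneg hc
  -- c³ ≤ c (T* T) c = (T c)* (T c)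
  have s1 : c * c * c ≤ star (T * c) * (T * c) := by
    have h' := star_left_conjugate_le_conjugate h2 c
    rw [hsa.star_eq] at h'
    have e0 : star (T * c) * (T * c) = c * (star T * T) * c := by
      rw [star_mul, hsa.star_eq]; noncomm_ring
    rw [e0]; exact h'
  have hc3 : 0 ≤ c * c * c := by
    have := star_left_conjugate_nonneg hc c
    rwa [hsa.star_eq] at this
  have n1 : ‖c‖ ^ 3 ≤ ‖T * c‖ ^ 2 := by
    have := CStarAlgebra.norm_le_norm_of_nonneg_of_le hc3 s1
    rwa [norm_cube c hsa, CStarRing.norm_star_mul_self, ← pow_two] at this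
  -- ‖T c‖² = ‖T c² T*‖ ≤ ‖c‖ ‖T c T*‖ ≤ ‖c‖ ‖T S² T*‖ = ‖c‖ ‖T S‖²
  have e1 : (T * c) * star (T * c) = T * (c * c) * star T := by
    rw [star_mul, hsa.star_eq]; noncomm_ring
  have s2 : T * (c * c) * star T ≤ ‖c‖ • (T * c * star T) := by
    have := star_right_conjugate_le_conjugate (sq_le_norm_smul hc) T
    calc T * (c * c) * star T ≤ T * (‖c‖ • c) * star T := this
    _ = ‖c‖ • (T * c * star T) := by
        rw [mul_smul_comm, smul_mul_assoc]
  have hTccT : 0 ≤ T * (c * c) * star T := by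
    have h' : 0 ≤ c * c := by
      have := star_mul_self_nonneg c
      rwa [hsa.star_eq] at this
    exact star_right_conjugate_nonneg h' T
  have n2 : ‖T * c‖ ^ 2 ≤ ‖c‖ * ‖T * c * star T‖ := by
    have := CStarAlgebra.norm_le_norm_of_nonneg_of_le hTccT s2
    rw [← e1, CStarRing.norm_self_mul_star, ← pow_two] at this
    calc ‖T * c‖ ^ 2 ≤ ‖‖c‖ • (T * c * star T)‖ := this
    _ = ‖c‖ * ‖T * c * star T‖ := by
        rw [norm_smul, Real.norm_eq_abs, abs_of_nonneg (norm_nonneg c)]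
  have s3 : T * c * star T ≤ T * (S * S) * star T := star_right_conjugate_le_conjugate h1 T
  have e2 : T * (S * S) * star T = (T * S) * star (T * S) := by
    rw [star_mul, hS.star_eq]; noncomm_ring
  have n3 : ‖T * c * star T‖ ≤ ‖T * S‖ ^ 2 := by
    have := CStarAlgebra.norm_le_norm_of_nonneg_of_le (star_right_conjugate_nonneg hc T) s3
    rwa [e2, CStarRing.norm_self_mul_star, ← pow_two] at this
  -- combine
  have key : ‖c‖ ^ 3 ≤ ‖c‖ * ‖T * S‖ ^ 2 := by
    calc ‖c‖ ^ 3 ≤ ‖T * c‖ ^ 2 := n1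
    _ ≤ ‖c‖ * ‖T * c * star T‖ := n2
    _ ≤ ‖c‖ * ‖T * S‖ ^ 2 := by
        exact mul_le_mul_of_nonneg_left n3 (norm_nonneg c)
  rcases eq_or_lt_of_le (norm_nonneg c) with h0 | h0
  · rw [← h0]; exact norm_nonneg _
  · have h2' : ‖c‖ ^ 2 ≤ ‖T * S‖ ^ 2 := by nlinarith [key, h0]
    nlinarith [h2', norm_nonneg (T * S), h0]

/-- If `A` has no nonzero square-zero elements, corners of disjointly supported
functional calculus elements vanish. -/
lemma corner_vanish (N : ∀ z : A, z * z = 0 → z = 0) {s : A} (hs : IsSelfAdjoint s) (t : A)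
    (ψ φ : ℝ → ℝ) (hpt : ∀ τ, ψ τ * φ τ = 0) :
    cfc ψ (s : A⁺¹) * (t : A⁺¹) * cfc φ (s : A⁺¹) = 0 := by
  have hSsa : IsSelfAdjoint ((s : A⁺¹)) := hs.inr ℂ
  by_cases hcont : ContinuousOn ψ (spectrum ℝ (s : A⁺¹)) ∧
      ContinuousOn φ (spectrum ℝ (s : A⁺¹))
  · obtain ⟨hψ, hφ⟩ := hcont
    set z := cfc ψ (s : A⁺¹) * (t : A⁺¹) * cfc φ (s : A⁺¹) with hz
    have hfst : z.fst = 0 := by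
      rw [hz]
      simp [Unitization.fst_mul]
    have hmul0 : cfc φ (s : A⁺¹) * cfc ψ (s : A⁺¹) = 0 := by
      rw [← cfc_mul _ _ _ hφ hψ]
      have he : (fun τ => φ τ * ψ τ) = (0 : ℝ → ℝ) := by
        funext τ; rw [Pi.zero_apply, mul_comm]; exact hpt τ
      rw [he, cfc_zero]
    have hz2 : z * z = 0 := by
      rw [hz, show cfc ψ (s:A⁺¹) * ↑t * cfc φ (s:A⁺¹) * (cfc ψ (s:A⁺¹) * ↑t * cfc φ (s:A⁺¹))
          = cfc ψ (s:A⁺¹) * ↑t * (cfc φ (s:A⁺¹) * cfc ψ (s:A⁺¹)) * ↑t * cfc φ (s:A⁺¹) from by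
            noncomm_ring, hmul0]
      noncomm_ring
    have hzr : z = ((z.snd : A) : A⁺¹) := by
      conv_lhs => rw [← Unitization.inl_fst_add_inr_snd_eq z]
      rw [hfst]; simp
    have h0 : z.snd * z.snd = 0 := by
      have h' : ((z.snd * z.snd : A) : A⁺¹) = ((0 : A) : A⁺¹) := by
        rw [Unitization.inr_mul ℂ, ← hzr, hz2, Unitization.inr_zero]
      exact Unitization.inr_injective h'
    rw [hzr, N _ h0, Unitization.inr_zero]
  · rcases not_and_or.mp hcont with hψ | hφ
    · rw [cfc_apply_of_not_continuousOn _ hψ, zero_mul, zero_mul]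
    · rw [cfc_apply_of_not_continuousOn _ hφ, mul_zero]

/-- Row-column bound for sums with orthogonal right factors. -/
lemma orth_bound (F : Finset ℕ) (a b : ℕ → A⁺¹) (u : A⁺¹)
    (hborth : ∀ k ∈ F, ∀ l ∈ F, k ≠ l → b k * star (b l) = 0)
    (hbsa : ∀ k ∈ F, ‖b k‖ ≤ 1)
    {β : ℝ} (hβ : 0 ≤ β)
    (haa : ‖∑ k ∈ F, a k * star (a k)‖ ≤ β) :
    ‖∑ k ∈ F, a k * u * b k‖ ^ 2 ≤ β * ‖u‖ ^ 2 := by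
  set X := ∑ k ∈ F, a k * u * b k with hX
  have hdiag : X * star X = ∑ k ∈ F, (a k * u * b k) * star (a k * u * b k) := by
    rw [hX, star_sum, Finset.sum_mul_sum]
    refine Finset.sum_congr rfl fun k hk => ?_
    refine Finset.sum_eq_single_of_mem k hk fun l hl hne => ?_
    have e1 : a k * u * b k * star (a l * u * b l)
        = a k * u * (b k * star (b l)) * (star u * star (a l)) := by
      simp only [star_mul]; noncomm_ring
    rw [e1, hborth k hk l hl hne.symm, mul_zero, zero_mul]
  -- bound each diagonal term
  have hterm : ∀ k ∈ F, (a k * u * b k) * star (a k * u * b k)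
      ≤ (‖u‖ ^ 2) • (a k * star (a k)) := by
    intro k hk
    have hbb : IsSelfAdjoint (b k * star (b k)) := by
      rw [IsSelfAdjoint, star_mul, star_star]
    have step1 : (a k * u * b k) * star (a k * u * b k)
        = (a k * u) * (b k * star (b k)) * star (a k * u) := by
      simp only [star_mul]; noncomm_ring
    have step2 : (a k * u) * (b k * star (b k)) * star (a k * u)
        ≤ ‖b k * star (b k)‖ • ((a k * u) * star (a k * u)) :=
      CStarAlgebra.star_right_conjugate_le_norm_smul hbb
    have hb1 : ‖b k * star (b k)‖ ≤ 1 := by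
      calc ‖b k * star (b k)‖ ≤ ‖b k‖ * ‖star (b k)‖ := norm_mul_le _ _
      _ = ‖b k‖ * ‖b k‖ := by rw [norm_star]
      _ ≤ 1 * 1 := by
          have := hbsa k hk
          exact mul_le_mul this this (norm_nonneg _) zero_le_one
      _ = 1 := by ring
    have step3 : ‖b k * star (b k)‖ • ((a k * u) * star (a k * u))
        ≤ (1 : ℝ) • ((a k * u) * star (a k * u)) := by
      rw [← sub_nonneg, ← sub_smul]
      exact smul_nonneg_real (mul_star_self_nonneg _) (by linarith)
    have step4 : (a k * u) * star (a k * u) = a k * (u * star u) * star (a k) := by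
      simp only [star_mul]; noncomm_ring
    have step5 : a k * (u * star u) * star (a k)
        ≤ ‖u * star u‖ • (a k * star (a k)) :=
      CStarAlgebra.star_right_conjugate_le_norm_smul (by rw [IsSelfAdjoint, star_mul, star_star])
    have huu : ‖u * star u‖ = ‖u‖ ^ 2 := by
      rw [CStarRing.norm_self_mul_star]; ring
    calc (a k * u * b k) * star (a k * u * b k)
        ≤ (1 : ℝ) • ((a k * u) * star (a k * u)) := by
          rw [step1]; exact step2.trans step3
    _ = a k * (u * star u) * star (a k) := by rw [one_smul, step4]
    _ ≤ ‖u * star u‖ • (a k * star (a k)) := step5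
    _ = (‖u‖ ^ 2) • (a k * star (a k)) := by rw [huu]
  have hsum : X * star X ≤ (‖u‖ ^ 2) • ∑ k ∈ F, a k * star (a k) := by
    rw [hdiag, Finset.smul_sum]
    exact Finset.sum_le_sum hterm
  have hXX : ‖X * star X‖ ≤ β * ‖u‖ ^ 2 := by
    have h0 : 0 ≤ X * star X := mul_star_self_nonneg X
    have h1 := CStarAlgebra.norm_le_norm_of_nonneg_of_le h0 hsum
    calc ‖X * star X‖ ≤ ‖(‖u‖ ^ 2) • ∑ k ∈ F, a k * star (a k)‖ := h1
    _ = ‖u‖ ^ 2 * ‖∑ k ∈ F, a k * star (a k)‖ := by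
        rw [norm_smul, Real.norm_eq_abs, abs_of_nonneg (by positivity)]
    _ ≤ ‖u‖ ^ 2 * β := by
        exact mul_le_mul_of_nonneg_left haa (by positivity)
    _ = β * ‖u‖ ^ 2 := by ring
  calc ‖X‖ ^ 2 = ‖X * star X‖ := by rw [CStarRing.norm_self_mul_star]; ring
  _ ≤ β * ‖u‖ ^ 2 := hXX

lemma le_of_sq_le_sq {a b : ℝ} (ha : 0 ≤ a) (hb : 0 ≤ b) (hab : a ^ 2 ≤ b ^ 2) : a ≤ b := by
  nlinarith

set_option maxHeartbeats 1000000 in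
lemma commutator_bound (N : ∀ z : A, z * z = 0 → z = 0) {s : A} (hs : IsSelfAdjoint s) (t : A)
    {ε : ℝ} (hε : 0 < ε) : ‖(s : A⁺¹) * (t : A⁺¹) - (t : A⁺¹) * (s : A⁺¹)‖ ≤ ε := by
  set S : A⁺¹ := (s : A⁺¹) with hS_def
  have hSsa : IsSelfAdjoint S := hs.inr ℂ
  set M : ℝ := ‖s‖ with hM_def
  rcases eq_or_lt_of_le (norm_nonneg s) with hM0 | hM0
  · have : s = 0 := norm_eq_zero.mp (by rw [← hM0])
    simp only [hS_def, this, Unitization.inr_zero, zero_mul, mul_zero, sub_zero, norm_zero]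
    exact hε.le
  -- choose m
  obtain ⟨m, hm⟩ := exists_nat_gt (max 1 (12 * M * ‖t‖ / ε))
  have hm1 : 1 ≤ (m:ℝ) := le_of_lt (lt_of_le_of_lt (le_max_left _ _) hm)
  have hm0 : 0 < (m:ℝ) := by linarith
  set h : ℝ := 2 * M / m with hh_def
  have hh : 0 < h := by positivity
  set K : ℕ := m + 1 with hK_def
  set P : ℕ → A⁺¹ := fun k => cfc (tent M h k) S with hP_def
  set c : ℕ → ℝ := fun k => -M + (k : ℝ) * h with hc_def
  have hsp : ∀ τ ∈ spectrum ℝ S, -M ≤ τ ∧ τ ≤ M := by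
    intro τ hτ
    have := spectrum.norm_le_norm_of_mem hτ
    rw [hS_def, Unitization.norm_inr, Real.norm_eq_abs, ← hM_def] at this
    exact abs_le.mp this
  have hsum1 : ∀ τ ∈ spectrum ℝ S, ∑ k ∈ Finset.range K, tent M h k τ = 1 := by
    intro τ hτ
    obtain ⟨hτ1, hτ2⟩ := hsp τ hτ
    rw [tent_sum K τ]
    have e1 : rmp M h K τ = 1 := by
      apply rmp_one hh
      have e : ((K : ℝ) - 1) * h = 2 * M := by
        rw [hK_def]; push_cast; rw [hh_def]; field_simp; ring
      rw [e]; linarith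
    have e2 : rmp M h 0 τ = 0 := by
      apply rmp_zero hh; push_cast; linarith
    rw [e1, e2, sub_zero]
  have hPsa : ∀ k, IsSelfAdjoint (P k) := fun k => cfc_predicate _ _
  have hPnorm : ∀ k, ‖P k‖ ≤ 1 := by
    intro k
    refine norm_cfc_le zero_le_one fun τ _ => ?_
    rw [Real.norm_eq_abs, abs_of_nonneg (tent_nonneg hh k τ)]
    exact tent_le_one k τ
  have hPsum : ∑ k ∈ Finset.range K, P k = 1 := by
    have h1 : ∑ k ∈ Finset.range K, P k = cfc (∑ k ∈ Finset.range K, tent M h k) S := by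
      rw [cfc_sum _ S _ (fun i _ => (tent_cont i).continuousOn)]
    rw [h1, ← cfc_one (R := ℝ) S]
    apply cfc_congr
    intro τ hτ
    have := hsum1 τ hτ
    simpa using this
  have hPmul : ∀ k l, (k + 2 ≤ l ∨ l + 2 ≤ k) → P k * P l = 0 := by
    intro k l hkl
    rw [hP_def]
    rw [← cfc_mul _ _ S (tent_cont k).continuousOn (tent_cont l).continuousOn]
    have he : (fun τ => tent M h k τ * tent M h l τ) = (0 : ℝ → ℝ) := by
      funext τ
      rcases hkl with hkl | hkl
      · exact tent_disj hh hkl τ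
      · rw [mul_comm]; exact tent_disj hh hkl τ
    rw [he, cfc_zero]
  have hcorner : ∀ k l, (k + 2 ≤ l ∨ l + 2 ≤ k) → P k * (t : A⁺¹) * P l = 0 := by
    intro k l hkl
    rw [hP_def]
    refine corner_vanish N hs t _ _ fun τ => ?_
    rcases hkl with hkl | hkl
    · exact tent_disj hh hkl τ
    · rw [mul_comm]; exact tent_disj hh hkl τ
  -- the discretized element
  set Tc : A⁺¹ := ∑ k ∈ Finset.range K, c k • P k with hTc_def
  have hTcnorm : ‖S - Tc‖ ≤ h := by
    have e1 : Tc = cfc (∑ k ∈ Finset.range K, fun τ => c k * tent M h k τ) S := by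
      rw [cfc_sum (fun k τ => c k * tent M h k τ) S _ (fun i _ => (continuous_const.mul (tent_cont i)).continuousOn)]
      rw [hTc_def]
      refine Finset.sum_congr rfl fun k _ => ?_
      rw [cfc_const_mul _ _ S (tent_cont k).continuousOn, hP_def]
    have e2 : S - Tc
        = cfc (fun τ => τ - (∑ k ∈ Finset.range K, fun τ' => c k * tent M h k τ') τ) S := by
      have hcont : Continuous (∑ k ∈ Finset.range K, fun τ' => c k * tent M h k τ') := by
        have : (∑ k ∈ Finset.range K, fun τ' => c k * tent M h k τ')
            = fun τ' => ∑ k ∈ Finset.range K, c k * tent M h k τ' := by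
          funext τ'; rw [Finset.sum_apply]
        rw [this]
        exact continuous_finset_sum _ fun i _ => continuous_const.mul (tent_cont i)
      rw [cfc_sub _ _ S (by fun_prop) hcont.continuousOn, cfc_id' ℝ S, ← e1]
    rw [e2]
    refine norm_cfc_le hh.le fun τ hτ => ?_
    obtain ⟨hτ1, hτ2⟩ := hsp τ hτ
    have hs1 := hsum1 τ hτ
    have e3 : τ - (∑ k ∈ Finset.range K, fun τ' => c k * tent M h k τ') τ
        = ∑ k ∈ Finset.range K, (τ - c k) * tent M h k τ := by
      rw [Finset.sum_apply]
      have : τ = ∑ k ∈ Finset.range K, τ * tent M h k τ := by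
        rw [← Finset.mul_sum, hs1, mul_one]
      calc τ - ∑ k ∈ Finset.range K, c k * tent M h k τ
          = (∑ k ∈ Finset.range K, τ * tent M h k τ)
            - ∑ k ∈ Finset.range K, c k * tent M h k τ := by rw [← this]
      _ = ∑ k ∈ Finset.range K, ((τ * tent M h k τ) - c k * tent M h k τ) := by
          rw [Finset.sum_sub_distrib]
      _ = ∑ k ∈ Finset.range K, (τ - c k) * tent M h k τ := by
          refine Finset.sum_congr rfl fun k _ => by ring
    rw [e3, Real.norm_eq_abs]
    calc |∑ k ∈ Finset.range K, (τ - c k) * tent M h k τ|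
        ≤ ∑ k ∈ Finset.range K, |(τ - c k) * tent M h k τ| :=
          Finset.abs_sum_le_sum_abs _ _
    _ ≤ ∑ k ∈ Finset.range K, h * tent M h k τ := by
        refine Finset.sum_le_sum fun k _ => ?_
        rw [abs_mul, abs_of_nonneg (tent_nonneg hh k τ)]
        exact tent_center hh τ
    _ = h := by rw [← Finset.mul_sum, hs1, mul_one]
  -- the double sum identity
  have hdouble : Tc * (t : A⁺¹) - (t : A⁺¹) * Tc
      = ∑ k ∈ Finset.range K, ∑ l ∈ Finset.range K,
          (c k - c l) • (P k * (t : A⁺¹) * P l) := by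
    have e1 : Tc * (t : A⁺¹)
        = ∑ k ∈ Finset.range K, ∑ l ∈ Finset.range K, c k • (P k * (t : A⁺¹) * P l) := by
      rw [hTc_def, Finset.sum_mul]
      refine Finset.sum_congr rfl fun k _ => ?_
      rw [smul_mul_assoc, ← Finset.smul_sum]
      congr 1
      conv_lhs => rw [← mul_one (P k * (t : A⁺¹)), ← hPsum]
      rw [Finset.mul_sum]
    have e2 : (t : A⁺¹) * Tc
        = ∑ k ∈ Finset.range K, ∑ l ∈ Finset.range K, c l • (P k * (t : A⁺¹) * P l) := by
      rw [hTc_def, Finset.mul_sum, Finset.sum_comm]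
      refine Finset.sum_congr rfl fun l _ => ?_
      rw [mul_smul_comm, ← Finset.smul_sum]
      congr 1
      conv_lhs => rw [← one_mul ((t : A⁺¹) * P l), ← hPsum, Finset.sum_mul]
      exact Finset.sum_congr rfl fun k _ => by rw [mul_assoc]
    rw [e1, e2, ← Finset.sum_sub_distrib]
    refine Finset.sum_congr rfl fun k _ => ?_
    rw [← Finset.sum_sub_distrib]
    exact Finset.sum_congr rfl fun l _ => by rw [← sub_smul]
  -- uniform bound on sums of P k * P k over subsets
  have hONB : ∀ (F : Finset ℕ), F ⊆ Finset.range K → ‖∑ k ∈ F, P k * star (P k)‖ ≤ 1 := by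
    intro F hF
    have e1 : ∑ k ∈ F, P k * star (P k)
        = cfc (∑ k ∈ F, fun τ => tent M h k τ * tent M h k τ) S := by
      rw [cfc_sum (fun k τ => tent M h k τ * tent M h k τ) S _ (fun i _ => ((tent_cont i).mul (tent_cont i)).continuousOn)]
      refine Finset.sum_congr rfl fun k _ => ?_
      rw [(hPsa k).star_eq, hP_def, ← cfc_mul _ _ S (tent_cont k).continuousOn
        (tent_cont k).continuousOn]
    rw [e1]
    refine norm_cfc_le zero_le_one fun τ hτ => ?_
    rw [Finset.sum_apply, Real.norm_eq_abs, abs_of_nonneg (Finset.sum_nonneg fun k _ =>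
      mul_nonneg (tent_nonneg hh k τ) (tent_nonneg hh k τ))]
    calc ∑ k ∈ F, tent M h k τ * tent M h k τ
        ≤ ∑ k ∈ F, tent M h k τ := by
          refine Finset.sum_le_sum fun k _ => ?_
          nlinarith [tent_nonneg (M := M) hh k τ, tent_le_one (M := M) (h := h) k τ]
    _ ≤ ∑ k ∈ Finset.range K, tent M h k τ :=
        Finset.sum_le_sum_of_subset_of_nonneg hF fun k _ _ => tent_nonneg hh k τ
    _ = 1 := hsum1 τ hτ
  -- bound for shifted diagonal sums over parity-separated subsets
  have hDiag1 : ∀ (F : Finset ℕ), F ⊆ Finset.range m →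
      (∀ k ∈ F, ∀ l ∈ F, k ≠ l → (k + 2 ≤ l ∨ l + 2 ≤ k)) →
      ‖∑ k ∈ F, P k * (t : A⁺¹) * P (k + 1)‖ ≤ ‖(t : A⁺¹)‖ := by
    intro F hF hsep
    have hFK : F ⊆ Finset.range K := hF.trans (by
      intro a ha; simp only [Finset.mem_range] at ha ⊢; omega)
    have key := orth_bound F P (fun k => P (k + 1)) (t : A⁺¹)
      (fun k hk l hl hne => by
        rw [(hPsa (l + 1)).star_eq]
        exact hPmul (k + 1) (l + 1) (by rcases hsep k hk l hl hne with h' | h' <;> omega))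
      (fun k _ => hPnorm (k + 1)) zero_le_one (hONB F hFK)
    rw [one_mul] at key
    exact le_of_sq_le_sq (norm_nonneg _) (norm_nonneg _) key
  have hDiag2 : ∀ (F : Finset ℕ), F ⊆ Finset.range m →
      (∀ k ∈ F, ∀ l ∈ F, k ≠ l → (k + 2 ≤ l ∨ l + 2 ≤ k)) →
      ‖∑ k ∈ F, P (k + 1) * (t : A⁺¹) * P k‖ ≤ ‖(t : A⁺¹)‖ := by
    intro F hF hsep
    have haa : ‖∑ k ∈ F, P (k + 1) * star (P (k + 1))‖ ≤ 1 := by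
      have e : ∑ k ∈ F, P (k + 1) * star (P (k + 1))
          = ∑ j ∈ F.image (· + 1), P j * star (P j) := by
        rw [Finset.sum_image (fun a _ b _ hab => by omega)]
      rw [e]
      refine hONB _ ?_
      intro j hj
      simp only [Finset.mem_image] at hj
      obtain ⟨k, hk, rfl⟩ := hj
      have := hF hk
      simp only [Finset.mem_range] at this ⊢
      omega
    have key := orth_bound F (fun k => P (k + 1)) P (t : A⁺¹)
      (fun k hk l hl hne => by
        rw [(hPsa l).star_eq]
        exact hPmul k l (hsep k hk l hl hne))
      (fun k _ => hPnorm k) zero_le_one haa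
    rw [one_mul] at key
    exact le_of_sq_le_sq (norm_nonneg _) (norm_nonneg _) key
  -- reduce the double sum to the two adjacent diagonals
  have hsplit : Tc * (t : A⁺¹) - (t : A⁺¹) * Tc
      = ((-h) • ∑ k ∈ Finset.range m, P k * (t : A⁺¹) * P (k + 1))
      + (h • ∑ l ∈ Finset.range m, P (l + 1) * (t : A⁺¹) * P l) := by
    rw [hdouble]
    have hterm : ∀ k ∈ Finset.range K, ∀ l ∈ Finset.range K,
        (c k - c l) • (P k * (t : A⁺¹) * P l)
        = (if l = k + 1 then (-h) • (P k * (t : A⁺¹) * P l) else 0)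
          + (if k = l + 1 then h • (P k * (t : A⁺¹) * P l) else 0) := by
      intro k _ l _
      rcases eq_or_ne l (k + 1) with rfl | hl
      · rw [if_pos rfl, if_neg (by omega), add_zero]
        congr 1
        rw [hc_def]; push_cast; ring
      rcases eq_or_ne k (l + 1) with rfl | hk
      · rw [if_neg hl, if_pos rfl, zero_add]
        congr 1
        rw [hc_def]; push_cast; ring
      · rw [if_neg hl, if_neg hk, add_zero]
        rcases (by omega : k = l ∨ k + 2 ≤ l ∨ l + 2 ≤ k) with rfl | hc' | hc'
        · rw [sub_self, zero_smul]
        · rw [hcorner k l (Or.inl hc'), smul_zero]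
        · rw [hcorner k l (Or.inr hc'), smul_zero]
    calc ∑ k ∈ Finset.range K, ∑ l ∈ Finset.range K, (c k - c l) • (P k * (t:A⁺¹) * P l)
        = ∑ k ∈ Finset.range K, ∑ l ∈ Finset.range K,
            ((if l = k + 1 then (-h) • (P k * (t:A⁺¹) * P l) else 0)
             + (if k = l + 1 then h • (P k * (t:A⁺¹) * P l) else 0)) := by
          refine Finset.sum_congr rfl fun k hk => Finset.sum_congr rfl fun l hl => ?_
          exact hterm k hk l hl
    _ = (∑ k ∈ Finset.range K, ∑ l ∈ Finset.range K,
            (if l = k + 1 then (-h) • (P k * (t:A⁺¹) * P l) else 0))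
        + (∑ k ∈ Finset.range K, ∑ l ∈ Finset.range K,
            (if k = l + 1 then h • (P k * (t:A⁺¹) * P l) else 0)) := by
          rw [← Finset.sum_add_distrib]
          exact Finset.sum_congr rfl fun k _ => by rw [← Finset.sum_add_distrib]
    _ = ((-h) • ∑ k ∈ Finset.range m, P k * (t : A⁺¹) * P (k + 1))
        + (h • ∑ l ∈ Finset.range m, P (l + 1) * (t : A⁺¹) * P l) := by
          congr 1
          · rw [Finset.smul_sum]
            have e1 : ∀ k ∈ Finset.range K,
                (∑ l ∈ Finset.range K, if l = k + 1 then (-h) • (P k * (t:A⁺¹) * P l) else 0)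
                = if k + 1 ∈ Finset.range K then (-h) • (P k * (t:A⁺¹) * P (k+1)) else 0 :=
              fun k _ => Finset.sum_ite_eq' _ _ _
            rw [Finset.sum_congr rfl e1]
            rw [← Finset.sum_subset (Finset.range_subset_range.mpr (by omega : m ≤ K))
              (fun x hx hnx => ?_)]
            · refine Finset.sum_congr rfl fun k hk => ?_
              rw [if_pos]
              simp only [Finset.mem_range] at hk ⊢
              omega
            · rw [if_neg]
              simp only [Finset.mem_range] at hx hnx ⊢
              omega
          · rw [Finset.smul_sum, Finset.sum_comm]
            have e1 : ∀ l ∈ Finset.range K,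
                (∑ k ∈ Finset.range K, if k = l + 1 then h • (P k * (t:A⁺¹) * P l) else 0)
                = if l + 1 ∈ Finset.range K then h • (P (l+1) * (t:A⁺¹) * P l) else 0 :=
              fun l _ => Finset.sum_ite_eq' _ _ _
            rw [Finset.sum_congr rfl e1]
            rw [← Finset.sum_subset (Finset.range_subset_range.mpr (by omega : m ≤ K))
              (fun x hx hnx => ?_)]
            · refine Finset.sum_congr rfl fun l hl => ?_
              rw [if_pos]
              simp only [Finset.mem_range] at hl ⊢
              omega
            · rw [if_neg]
              simp only [Finset.mem_range] at hx hnx ⊢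
              omega
  -- parity split bounds
  have hD1 : ‖∑ k ∈ Finset.range m, P k * (t : A⁺¹) * P (k + 1)‖ ≤ 2 * ‖(t : A⁺¹)‖ := by
    rw [← Finset.sum_filter_add_sum_filter_not (Finset.range m) (fun k => Even k)]
    refine (norm_add_le _ _).trans ?_
    have b1 := hDiag1 ((Finset.range m).filter (fun k => Even k)) (Finset.filter_subset _ _)
      (fun k hk l hl hne => by
        simp only [Finset.mem_filter] at hk hl
        obtain ⟨a, rfl⟩ := hk.2
        obtain ⟨b, rfl⟩ := hl.2
        omega)
    have b2 := hDiag1 ((Finset.range m).filter (fun k => ¬ Even k)) (Finset.filter_subset _ _)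
      (fun k hk l hl hne => by
        simp only [Finset.mem_filter] at hk hl
        obtain ⟨a, rfl⟩ := Nat.not_even_iff_odd.mp hk.2
        obtain ⟨b, rfl⟩ := Nat.not_even_iff_odd.mp hl.2
        omega)
    linarith
  have hD2 : ‖∑ k ∈ Finset.range m, P (k + 1) * (t : A⁺¹) * P k‖ ≤ 2 * ‖(t : A⁺¹)‖ := by
    rw [← Finset.sum_filter_add_sum_filter_not (Finset.range m) (fun k => Even k)]
    refine (norm_add_le _ _).trans ?_
    have b1 := hDiag2 ((Finset.range m).filter (fun k => Even k)) (Finset.filter_subset _ _)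
      (fun k hk l hl hne => by
        simp only [Finset.mem_filter] at hk hl
        obtain ⟨a, rfl⟩ := hk.2
        obtain ⟨b, rfl⟩ := hl.2
        omega)
    have b2 := hDiag2 ((Finset.range m).filter (fun k => ¬ Even k)) (Finset.filter_subset _ _)
      (fun k hk l hl hne => by
        simp only [Finset.mem_filter] at hk hl
        obtain ⟨a, rfl⟩ := Nat.not_even_iff_odd.mp hk.2
        obtain ⟨b, rfl⟩ := Nat.not_even_iff_odd.mp hl.2
        omega)
    linarith
  have hX : ‖Tc * (t : A⁺¹) - (t : A⁺¹) * Tc‖ ≤ 4 * h * ‖(t : A⁺¹)‖ := by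
    rw [hsplit]
    refine (norm_add_le _ _).trans ?_
    rw [norm_smul, norm_smul, Real.norm_eq_abs, Real.norm_eq_abs, abs_neg,
      abs_of_pos hh]
    nlinarith [hD1, hD2, hh, norm_nonneg (∑ k ∈ Finset.range m, P k * (t : A⁺¹) * P (k + 1)),
      norm_nonneg (∑ k ∈ Finset.range m, P (k + 1) * (t : A⁺¹) * P k)]
  have decomp : S * (t : A⁺¹) - (t : A⁺¹) * S
      = ((S - Tc) * (t : A⁺¹) - (t : A⁺¹) * (S - Tc)) + (Tc * (t : A⁺¹) - (t : A⁺¹) * Tc) := by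
    noncomm_ring
  have htotal : ‖S * (t : A⁺¹) - (t : A⁺¹) * S‖ ≤ 6 * h * ‖(t : A⁺¹)‖ := by
    rw [decomp]
    refine (norm_add_le _ _).trans ?_
    have e1 : ‖(S - Tc) * (t : A⁺¹) - (t : A⁺¹) * (S - Tc)‖ ≤ 2 * h * ‖(t : A⁺¹)‖ := by
      refine (norm_sub_le _ _).trans ?_
      have f1 : ‖(S - Tc) * (t : A⁺¹)‖ ≤ h * ‖(t : A⁺¹)‖ :=
        (norm_mul_le _ _).trans (mul_le_mul_of_nonneg_right hTcnorm (norm_nonneg _))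
      have f2 : ‖(t : A⁺¹) * (S - Tc)‖ ≤ ‖(t : A⁺¹)‖ * h :=
        (norm_mul_le _ _).trans (mul_le_mul_of_nonneg_left hTcnorm (norm_nonneg _))
      nlinarith
    nlinarith [hX]
  refine htotal.trans ?_
  have hnt : ‖(t : A⁺¹)‖ = ‖t‖ := Unitization.norm_inr t
  rw [hnt, hh_def]
  have hlt : 12 * M * ‖t‖ / ε < m := lt_of_le_of_lt (le_max_right _ _) hm
  rw [div_lt_iff₀ hε] at hlt
  have e : 6 * (2 * M / ↑m) * ‖t‖ = 12 * M * ‖t‖ / ↑m := by ring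
  rw [e, div_le_iff₀ hm0]
  nlinarith [hlt]

set_option maxHeartbeats 2000000 in
lemma no_interp {x : A} (hx1 : ‖x‖ = 1) (hx2 : x * x = 0) :
    ∃ a₁ a₂ b₁ b₂ : A,
      IsSelfAdjoint a₁ ∧ IsSelfAdjoint a₂ ∧ IsSelfAdjoint b₁ ∧ IsSelfAdjoint b₂ ∧
      CStarLe a₁ b₁ ∧ CStarLe a₁ b₂ ∧ CStarLe a₂ b₁ ∧ CStarLe a₂ b₂ ∧
      ¬ ∃ c : A, IsSelfAdjoint c ∧
        CStarLe a₁ c ∧ CStarLe a₂ c ∧ CStarLe c b₁ ∧ CStarLe c b₂ := by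
  have sx2 : star x * star x = 0 := by
    have := congrArg star hx2
    simpa [star_mul] using this
  have h1 : ∀ b : A, x * (x * b) = 0 := fun b => by rw [← mul_assoc, hx2, zero_mul]
  have h2 : ∀ b : A, star x * (star x * b) = 0 := fun b => by rw [← mul_assoc, sx2, zero_mul]
  set e : A := star x * x with he_def
  set f : A := x * star x with hf_def
  set m : A := x * star x * x with hm_def
  have he : IsSelfAdjoint e := by rw [he_def, IsSelfAdjoint, star_mul, star_star]
  have hf : IsSelfAdjoint f := by rw [hf_def, IsSelfAdjoint, star_mul, star_star]
  have hne : ‖e‖ = 1 := by rw [he_def, CStarRing.norm_star_mul_self, hx1]; ring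
  have hnf : ‖f‖ = 1 := by rw [hf_def, CStarRing.norm_self_mul_star, hx1]; ring
  set a₂ : A := (7/20 : ℝ) • (f * f) + (11/10 : ℝ) • (m + star m) + (-2 : ℝ) • e with ha₂_def
  set b₁ : A := f * f with hb₁_def
  set b₂ : A := (2⁻¹ : ℝ) • ((x + e) * (star x + e)) with hb₂_def
  have hb₁sa : IsSelfAdjoint b₁ := by rw [hb₁_def, IsSelfAdjoint, star_mul, hf.star_eq]
  have hxe : star (star x + e) = x + e := by rw [star_add, star_star, he.star_eq]
  have hb₂sa : IsSelfAdjoint b₂ := by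
    rw [hb₂_def, IsSelfAdjoint]
    simp only [star_smul, star_trivial, star_mul, star_add, star_star, he.star_eq]
  have ha₂sa : IsSelfAdjoint a₂ := by
    have k1 : IsSelfAdjoint (f * f) := by rw [IsSelfAdjoint, star_mul, hf.star_eq]
    have k2 : IsSelfAdjoint (m + star m) := by rw [IsSelfAdjoint, star_add, star_star, add_comm]
    rw [ha₂_def]
    exact ((IsSelfAdjoint.smul (star_trivial _) k1).add
      (IsSelfAdjoint.smul (star_trivial _) k2)).add (IsSelfAdjoint.smul (star_trivial _) he)
  refine ⟨0, a₂, b₁, b₂, (by simp [IsSelfAdjoint] : IsSelfAdjoint (0:A)), ha₂sa, hb₁sa, hb₂sa, ?_, ?_, ?_, ?_, ?_⟩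
  · exact ⟨f, by rw [sub_zero, hb₁_def, hf.star_eq]⟩
  · refine ⟨(Real.sqrt 2)⁻¹ • (star x + e), ?_⟩
    rw [sub_zero, hb₂_def]
    simp only [star_smul, star_trivial, star_add, star_star, he.star_eq, smul_mul_assoc,
      mul_smul_comm, smul_smul]
    congr 1
    rw [← mul_inv, Real.mul_self_sqrt (by norm_num)]
  · -- CStarLe a₂ b₁
    have idA : b₁ - a₂
        = star ((-77/65 : ℝ) • x + (7/10 : ℝ) • f) * ((-77/65 : ℝ) • x + (7/10 : ℝ) • f)
        + star ((-44/65 : ℝ) • x + (2/5 : ℝ) • f) * ((-44/65 : ℝ) • x + (2/5 : ℝ) • f)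
        + (9/65 : ℝ) • e := by
      rw [ha₂_def, hb₁_def, hf_def, he_def, hm_def]
      simp only [star_trivial, star_add, star_smul, star_mul, star_star, mul_add, add_mul,
        smul_mul_assoc, mul_smul_comm, smul_smul, mul_assoc, hx2, sx2, h1, h2, mul_zero,
        zero_mul, smul_zero, add_zero, zero_add]
      module
    apply exists_star_mul_self
    rw [idA, he_def]
    simp only [Unitization.inr_add ℂ, Unitization.inr_smul ℂ, Unitization.inr_mul ℂ,
      Unitization.inr_star]
    refine add_nonneg (add_nonneg (star_mul_self_nonneg _) (star_mul_self_nonneg _)) ?_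
    exact smul_nonneg_real (star_mul_self_nonneg _) (by norm_num)
  · -- CStarLe a₂ b₂
    apply exists_star_mul_self
    have hX2 : (x : A⁺¹) * (x : A⁺¹) = 0 := by
      rw [← Unitization.inr_mul ℂ, hx2, Unitization.inr_zero]
    have hsX2 : star (x : A⁺¹) * star (x : A⁺¹) = 0 := by
      rw [← star_mul, hX2, star_zero]
    have h1X : ∀ b : A⁺¹, (x : A⁺¹) * ((x : A⁺¹) * b) = 0 := fun b => by
      rw [← mul_assoc, hX2, zero_mul]
    have h2X : ∀ b : A⁺¹, star (x : A⁺¹) * (star (x : A⁺¹) * b) = 0 := fun b => by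
      rw [← mul_assoc, hsX2, zero_mul]
    have hE1 : ((e : A) : A⁺¹) ≤ 1 := by
      have h := IsSelfAdjoint.le_algebraMap_norm_self (he.inr ℂ)
      rwa [Unitization.norm_inr, hne, map_one] at h
    have hF1 : ((f : A) : A⁺¹) ≤ 1 := by
      have h := IsSelfAdjoint.le_algebraMap_norm_self (hf.inr ℂ)
      rwa [Unitization.norm_inr, hnf, map_one] at h
    have hone : (0 : A⁺¹) ≤ 1 := by simpa using star_mul_self_nonneg (1 : A⁺¹)
    have key : ((b₂ - a₂ : A) : A⁺¹)
        = star ((3/8 : ℝ) • star (x : A⁺¹) - (20/13 : ℝ) • (e : A⁺¹))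
            * ((3/8 : ℝ) • star (x : A⁺¹) - (20/13 : ℝ) • (e : A⁺¹))
        + star ((3/40 : ℝ) • star (x : A⁺¹) - (4/13 : ℝ) • (e : A⁺¹))
            * ((3/40 : ℝ) • star (x : A⁺¹) - (4/13 : ℝ) • (e : A⁺¹))
        + (x : A⁺¹) * ((7/20 : ℝ) • ((1 : A⁺¹) - (e : A⁺¹)) + (3/800 : ℝ) • (1 : A⁺¹))
            * star (x : A⁺¹)
        + star (x : A⁺¹) * ((663/338 : ℝ) • ((1 : A⁺¹) - (f : A⁺¹)) + (13/338 : ℝ) • (1 : A⁺¹))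
            * (x : A⁺¹) := by
      rw [Unitization.inr_sub ℂ, hb₂_def, ha₂_def, hb₁_def, hf_def, he_def, hm_def]
      simp only [Unitization.inr_add ℂ, Unitization.inr_smul ℂ, Unitization.inr_mul ℂ,
        Unitization.inr_star]
      simp only [star_trivial, star_sub, star_add, star_smul, star_mul, star_star, star_one,
        mul_add, add_mul, sub_mul, mul_sub, smul_mul_assoc, mul_smul_comm, smul_smul,
        mul_assoc, mul_one, one_mul, hX2, hsX2, h1X, h2X, mul_zero, zero_mul, smul_zero,
        add_zero, zero_add]
      module
    rw [key]
    refine add_nonneg (add_nonneg (add_nonneg (star_mul_self_nonneg _)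
      (star_mul_self_nonneg _)) ?_) ?_
    · refine star_right_conjugate_nonneg (add_nonneg ?_ ?_) _
      · exact smul_nonneg_real (sub_nonneg.2 hE1) (by norm_num)
      · exact smul_nonneg_real hone (by norm_num)
    · refine star_left_conjugate_nonneg (add_nonneg ?_ ?_) _
      · exact smul_nonneg_real (sub_nonneg.2 hF1) (by norm_num)
      · exact smul_nonneg_real hone (by norm_num)
  · -- no interpolant
    rintro ⟨c, hcsa, hc0, hca₂, hcb₁, hcb₂⟩
    have hX2 : (x : A⁺¹) * (x : A⁺¹) = 0 := by
      rw [← Unitization.inr_mul ℂ, hx2, Unitization.inr_zero]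
    have hsX2 : star (x : A⁺¹) * star (x : A⁺¹) = 0 := by
      rw [← star_mul, hX2, star_zero]
    have h1X : ∀ b : A⁺¹, (x : A⁺¹) * ((x : A⁺¹) * b) = 0 := fun b => by
      rw [← mul_assoc, hX2, zero_mul]
    have h2X : ∀ b : A⁺¹, star (x : A⁺¹) * (star (x : A⁺¹) * b) = 0 := fun b => by
      rw [← mul_assoc, hsX2, zero_mul]
    have hC0 : 0 ≤ (c : A⁺¹) := by
      have h := inr_le_of_cstarLe hc0
      rwa [Unitization.inr_zero] at h
    set E : A⁺¹ := ((e : A) : A⁺¹) with hE_def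
    have hEsa : IsSelfAdjoint E := he.inr ℂ
    have hnE : ‖E‖ = 1 := by rw [hE_def, Unitization.norm_inr, hne]
    -- ‖c‖ ≤ (√2)⁻¹
    have hCb₁ : (c : A⁺¹) ≤ ((f : A) : A⁺¹) * ((f : A) : A⁺¹) := by
      have h := inr_le_of_cstarLe hcb₁
      rwa [hb₁_def, Unitization.inr_mul ℂ] at h
    have hT : star ((Real.sqrt 2)⁻¹ • (star (x : A⁺¹) + E))
        * ((Real.sqrt 2)⁻¹ • (star (x : A⁺¹) + E)) = ((b₂ : A) : A⁺¹) := by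
      rw [hb₂_def, he_def]
      simp only [Unitization.inr_add ℂ, Unitization.inr_smul ℂ, Unitization.inr_mul ℂ,
        Unitization.inr_star, hE_def]
      simp only [star_smul, star_trivial, star_add, star_star, star_mul,
        smul_mul_assoc, mul_smul_comm, smul_smul]
      rw [← mul_inv, Real.mul_self_sqrt (by norm_num)]
      simp only [he_def, Unitization.inr_mul ℂ, Unitization.inr_star, star_mul, star_star]
    have hCb₂ : (c : A⁺¹) ≤ star ((Real.sqrt 2)⁻¹ • (star (x : A⁺¹) + E))
        * ((Real.sqrt 2)⁻¹ • (star (x : A⁺¹) + E)) := by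
      rw [hT]; exact inr_le_of_cstarLe hcb₂
    have hnormC : ‖(c : A⁺¹)‖ ≤ (Real.sqrt 2)⁻¹ := by
      have h := interpolant_norm_le hC0 (hf.inr ℂ) hCb₁ hCb₂
      refine h.trans ?_
      have e1 : ((Real.sqrt 2)⁻¹ • (star (x : A⁺¹) + E)) * ((f : A) : A⁺¹)
          = (Real.sqrt 2)⁻¹ • (star (x : A⁺¹) * ((f : A) : A⁺¹)) := by
        rw [smul_mul_assoc, add_mul, hE_def, he_def, hf_def]
        simp only [Unitization.inr_mul ℂ, Unitization.inr_star, ← mul_assoc]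
        rw [show star (x:A⁺¹) * (x:A⁺¹) * (x:A⁺¹) * star (x:A⁺¹)
            = star (x:A⁺¹) * ((x:A⁺¹) * (x:A⁺¹)) * star (x:A⁺¹) from by noncomm_ring, hX2]
        simp
      rw [e1, norm_smul, Real.norm_eq_abs, abs_of_nonneg (by positivity)]
      have e2 : ‖star (x : A⁺¹) * ((f : A) : A⁺¹)‖ ≤ 1 := by
        calc ‖star (x : A⁺¹) * ((f : A) : A⁺¹)‖ ≤ ‖star (x : A⁺¹)‖ * ‖((f : A) : A⁺¹)‖ :=
          norm_mul_le _ _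
        _ = 1 := by rw [norm_star, Unitization.norm_inr, Unitization.norm_inr, hx1, hnf]; ring
      calc (Real.sqrt 2)⁻¹ * ‖star (x : A⁺¹) * ((f : A) : A⁺¹)‖
          ≤ (Real.sqrt 2)⁻¹ * 1 := by
            exact mul_le_mul_of_nonneg_left e2 (by positivity)
      _ = (Real.sqrt 2)⁻¹ := by ring
    -- conjugate a₂ ≤ ‖c‖ • 1 by w
    have hA2C : ((a₂ : A) : A⁺¹) ≤ algebraMap ℝ A⁺¹ ‖(c : A⁺¹)‖ :=
      (inr_le_of_cstarLe hca₂).trans (IsSelfAdjoint.le_algebraMap_norm_self (.of_nonneg hC0))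
    set W : A⁺¹ := (x : A⁺¹) + (2/5 : ℝ) • E with hW_def
    have hconj : star W * ((a₂ : A) : A⁺¹) * W
        ≤ ‖(c : A⁺¹)‖ • (star W * W) := by
      have h := star_left_conjugate_le_conjugate hA2C W
      refine h.trans_eq ?_
      rw [Algebra.algebraMap_eq_smul_one, mul_smul_comm, smul_mul_assoc, mul_one]
    -- identities
    have idC : star W * ((a₂ : A) : A⁺¹) * W
        = (91/100 : ℝ) • ((E * E) * E) := by
      rw [ha₂_def, hb₁_def, hf_def, he_def, hm_def, hW_def, hE_def, he_def]
      simp only [Unitization.inr_add ℂ, Unitization.inr_smul ℂ, Unitization.inr_mul ℂ,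
        Unitization.inr_star]
      simp only [star_trivial, star_sub, star_add, star_smul, star_mul, star_star,
        mul_add, add_mul, smul_mul_assoc, mul_smul_comm, smul_smul,
        mul_assoc, hX2, hsX2, h1X, h2X, mul_zero, zero_mul, smul_zero, add_zero, zero_add]
      module
    have idD : star W * W = E + (4/25 : ℝ) • (E * E) := by
      rw [hW_def, hE_def, he_def]
      simp only [Unitization.inr_mul ℂ, Unitization.inr_star]
      simp only [star_trivial, star_add, star_smul, star_mul, star_star,
        mul_add, add_mul, smul_mul_assoc, mul_smul_comm, smul_smul,
        mul_assoc, hX2, hsX2, h1X, h2X, mul_zero, zero_mul, smul_zero, add_zero, zero_add]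
      module
    -- E³ ≥ 0 and its norm is 1
    have hE30 : 0 ≤ (91/100 : ℝ) • ((E * E) * E) := by
      have : 0 ≤ (E * E) * E := by
        have h := star_left_conjugate_nonneg (show (0:A⁺¹) ≤ E from by
          rw [hE_def, he_def, Unitization.inr_mul ℂ, Unitization.inr_star]
          exact star_mul_self_nonneg _) E
        rwa [hEsa.star_eq] at h
      exact smul_nonneg_real this (by norm_num)
    have hE3n : ‖(E * E) * E‖ = 1 := by rw [norm_cube E hEsa, hnE]; norm_num
    -- final numeric contradiction
    have hfinal : (91/100 : ℝ) ≤ ‖(c : A⁺¹)‖ * (29/25) := by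
      have hle : (91/100 : ℝ) • ((E * E) * E) ≤ ‖(c : A⁺¹)‖ • (star W * W) := by
        rw [← idC]; exact hconj
      have h := CStarAlgebra.norm_le_norm_of_nonneg_of_le hE30 hle
      rw [norm_smul, Real.norm_eq_abs, abs_of_nonneg (by norm_num : (0:ℝ) ≤ 91/100),
        hE3n, mul_one] at h
      refine h.trans ?_
      rw [norm_smul, Real.norm_eq_abs, abs_of_nonneg (norm_nonneg _), idD]
      refine mul_le_mul_of_nonneg_left ?_ (norm_nonneg _)
      calc ‖E + (4/25 : ℝ) • (E * E)‖ ≤ ‖E‖ + ‖(4/25 : ℝ) • (E * E)‖ := norm_add_le _ _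
      _ = ‖E‖ + (4/25) * ‖E * E‖ := by
          rw [norm_smul, Real.norm_eq_abs, abs_of_nonneg (by norm_num : (0:ℝ) ≤ 4/25)]
      _ = 29/25 := by rw [hnE, norm_mul_self E hEsa, hnE]; norm_num
    have hsqrt : Real.sqrt 2 ≤ 2 := by
      nlinarith [Real.sq_sqrt (by norm_num : (0:ℝ) ≤ 2), Real.sqrt_nonneg 2]
    have h2 : (0:ℝ) < Real.sqrt 2 := by positivity
    have : (91/100 : ℝ) ≤ (Real.sqrt 2)⁻¹ * (29/25) := by
      refine hfinal.trans ?_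
      exact mul_le_mul_of_nonneg_right hnormC (by norm_num)
    rw [inv_eq_one_div, div_mul_eq_mul_div, one_mul, le_div_iff₀ h2] at this
    nlinarith [Real.sq_sqrt (by norm_num : (0:ℝ) ≤ 2), Real.sqrt_nonneg 2]

lemma commute_of_no_nilpotent (N : ∀ z : A, z * z = 0 → z = 0) {s : A}
    (hs : IsSelfAdjoint s) (t : A) : s * t = t * s := by
  have h0 : (s : A⁺¹) * (t : A⁺¹) - (t : A⁺¹) * (s : A⁺¹) = 0 := by
    by_contra hne
    have hpos : 0 < ‖(s : A⁺¹) * (t : A⁺¹) - (t : A⁺¹) * (s : A⁺¹)‖ :=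
      norm_pos_iff.mpr hne
    have := commutator_bound N hs t (half_pos hpos)
    linarith
  have h1 : ((s * t - t * s : A) : A⁺¹) = ((0 : A) : A⁺¹) := by
    rw [Unitization.inr_sub ℂ, Unitization.inr_mul ℂ, Unitization.inr_mul ℂ, h0,
      Unitization.inr_zero]
  have h2 := Unitization.inr_injective (R := ℂ) h1
  rwa [sub_eq_zero] at h2

end Algebra

end NotRiesz

/-- If `A` is a non-commutative C*-algebra, then `A_sa` with the usual order
does not have the Riesz interpolation property: there are self-adjoint `a₁, a₂, b₁, b₂` with
`aᵢ ≤ bⱼ` for all `i, j`, but no self-adjoint `c` with `aᵢ ≤ c ≤ bⱼ` for all `i, j`. -/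
theorem not_rieszInterpolation_of_noncomm {A : Type*} [NonUnitalCStarAlgebra A]
    (h : ∃ x y : A, x * y ≠ y * x) :
    ∃ a₁ a₂ b₁ b₂ : A,
      IsSelfAdjoint a₁ ∧ IsSelfAdjoint a₂ ∧ IsSelfAdjoint b₁ ∧ IsSelfAdjoint b₂ ∧
      CStarLe a₁ b₁ ∧ CStarLe a₁ b₂ ∧ CStarLe a₂ b₁ ∧ CStarLe a₂ b₂ ∧
      ¬ ∃ c : A, IsSelfAdjoint c ∧
        CStarLe a₁ c ∧ CStarLe a₂ c ∧ CStarLe c b₁ ∧ CStarLe c b₂ := by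
  by_cases hN : ∃ z : A, z * z = 0 ∧ z ≠ 0
  · obtain ⟨z, hz2, hz0⟩ := hN
    have hnz : ‖z‖ ≠ 0 := norm_ne_zero_iff.mpr hz0
    have hx1 : ‖(‖z‖⁻¹ : ℝ) • z‖ = 1 := by
      rw [norm_smul, Real.norm_eq_abs, abs_inv, abs_of_nonneg (norm_nonneg z)]
      field_simp
    have hx2 : ((‖z‖⁻¹ : ℝ) • z) * ((‖z‖⁻¹ : ℝ) • z) = 0 := by
      rw [smul_mul_assoc, mul_smul_comm, hz2, smul_zero, smul_zero]
    exact NotRiesz.no_interp hx1 hx2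
  · exfalso
    push_neg at hN
    obtain ⟨u, v, huv⟩ := h
    apply huv
    have c1 : (u + star u) * v = v * (u + star u) :=
      NotRiesz.commute_of_no_nilpotent hN
        (by rw [IsSelfAdjoint, star_add, star_star, add_comm]) v
    have hsa2 : IsSelfAdjoint (Complex.I • (u - star u)) := by
      rw [IsSelfAdjoint, star_smul, star_sub, star_star, Complex.star_def, Complex.conj_I]
      module
    have c2' : (Complex.I • (u - star u)) * v = v * (Complex.I • (u - star u)) :=
      NotRiesz.commute_of_no_nilpotent hN hsa2 v
    have c2 : (u - star u) * v = v * (u - star u) := by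
      rw [smul_mul_assoc, mul_smul_comm] at c2'
      exact smul_right_injective A Complex.I_ne_zero c2'
    have key : (2 : ℂ) • (u * v) = (2 : ℂ) • (v * u) := by
      have e1 : (u + star u) * v + (u - star u) * v = (2 : ℂ) • (u * v) := by
        rw [add_mul, sub_mul, two_smul]; abel
      have e2 : v * (u + star u) + v * (u - star u) = (2 : ℂ) • (v * u) := by
        rw [mul_add, mul_sub, two_smul]; abel
      rw [← e1, ← e2, c1, c2]
    exact smul_right_injective A two_ne_zero key
end
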